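/- arXiv:2507.17344 — 3 statements merged into one kernel-verified Lean document; each statement's English description precedes it below -/
import Mathlib

section
/- (Newton–Maclaurin inequality, ratio form) Let 1 ≤ l < k ≤ n and let λ ∈ ℝ^n lie in the Gårding cone Γ_k^+ = {λ : σ_i(λ) > 0 for 1 ≤ i ≤ k}. Then H_{k-1}(λ) H_l(λ) ≥ H_k(λ) H_{l-1}(λ), where H_j = σ_j / C(n,j) is the normalized jth elementary symmetric function. Equality holds if and only if λ = c(1,…,1) for some c > 0. -/
/-- The `k`-th elementary symmetric polynomial of `x ∈ ℝⁿ`. -/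
noncomputable def sigmaE (n k : ℕ) (x : Fin n → ℝ) : ℝ :=
  ∑ s ∈ Finset.powersetCard k (Finset.univ : Finset (Fin n)), ∏ i ∈ s, x i

/-- The normalized `k`-th elementary symmetric polynomial `H_k = σ_k / C(n,k)`. -/
noncomputable def Hnorm (n k : ℕ) (x : Fin n → ℝ) : ℝ := sigmaE n k x / (n.choose k)

/-- The Gårding cone `Γ_k⁺ = {x : σ_i(x) > 0 for all 1 ≤ i ≤ k}`. -/
def GardingCone (n k : ℕ) : Set (Fin n → ℝ) :=
  {x | ∀ i, 1 ≤ i → i ≤ k → 0 < sigmaE n i x}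

open Multiset Polynomial

namespace NM

def Const (s : Multiset ℝ) : Prop := ∀ a ∈ s, ∀ b ∈ s, a = b

noncomputable def H (n k : ℕ) (s : Multiset ℝ) : ℝ := s.esymm k / (n.choose k)

/-- normalized symmetric function of a multiset, ambient size `n` -/

lemma esymm_cons (a : ℝ) (s : Multiset ℝ) (k : ℕ) :
    (a ::ₘ s).esymm (k+1) = s.esymm (k+1) + a * s.esymm k := by
  simp [Multiset.esymm, Multiset.powersetCard_cons, Multiset.sum_map_mul_left]

lemma esymm_zero' (s : Multiset ℝ) : s.esymm 0 = 1 := by simp [Multiset.esymm]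

lemma esymm_one' (s : Multiset ℝ) : s.esymm 1 = s.sum := by
  simp [Multiset.esymm, Multiset.powersetCard_one, Multiset.map_map]

lemma esymm_of_card_lt : ∀ {s : Multiset ℝ} {k : ℕ}, Multiset.card s < k → s.esymm k = 0 := by
  intro s k h
  simp [Multiset.esymm, Multiset.powersetCard_eq_empty _ h]

lemma esymm_card (s : Multiset ℝ) : s.esymm (Multiset.card s) = s.prod := by
  induction s using Multiset.induction_on with
  | empty => simp [esymm_zero']
  | cons a s ih =>
      rw [Multiset.card_cons, esymm_cons, esymm_of_card_lt (Nat.lt_succ_self _), ih]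
      simp

lemma esymm_replicate (n k : ℕ) (c : ℝ) :
    (Multiset.replicate n c).esymm k = (n.choose k : ℝ) * c ^ k := by
  induction n generalizing k with
  | zero =>
      cases k with
      | zero => simp [esymm_zero']
      | succ k => rw [esymm_of_card_lt (by simp)]; simp
  | succ n ih =>
      cases k with
      | zero => simp [esymm_zero']
      | succ k =>
          rw [Multiset.replicate_succ, esymm_cons, ih, ih, Nat.choose_succ_succ]
          push_cast
          ring

lemma H_replicate {n k : ℕ} (c : ℝ) (h : k ≤ n) :
    H n k (Multiset.replicate n c) = c ^ k := by
  have h0 : (0:ℝ) < (n.choose k : ℝ) := by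
    exact_mod_cast Nat.choose_pos h
  rw [H, esymm_replicate, mul_comm, mul_div_assoc, div_self (ne_of_gt h0), mul_one]

lemma sum_map_sq_nonneg (s : Multiset ℝ) (f : ℝ → ℝ) : 0 ≤ (s.map (fun b => (f b)^2)).sum :=
  Multiset.sum_nonneg (by
    intro x hx
    obtain ⟨b, _, rfl⟩ := Multiset.mem_map.1 hx
    positivity)

lemma sum_sq_eq_zero {s : Multiset ℝ} {f : ℝ → ℝ}
    (h : (s.map (fun b => (f b)^2)).sum = 0) : ∀ b ∈ s, f b = 0 := by
  induction s using Multiset.induction_on with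
  | empty => simp
  | cons a s ih =>
      rw [Multiset.map_cons, Multiset.sum_cons] at h
      have h1 : (0:ℝ) ≤ (f a)^2 := sq_nonneg _
      have h2 := sum_map_sq_nonneg s f
      have ha : (f a)^2 = 0 := by linarith
      have hs : (s.map (fun b => (f b)^2)).sum = 0 := by linarith
      intro b hb
      rcases Multiset.mem_cons.1 hb with rfl | hb
      · exact pow_eq_zero_iff (n := 2) (by norm_num) |>.1 ha
      · exact ih hs b hb

lemma sq_sum_aux (s : Multiset ℝ) (a : ℝ) :
    (s.map (fun b => (a - b)^2)).sum
      = (Multiset.card s : ℝ) * a^2 - 2*a*s.sum + (s.map (fun r => r^2)).sum := by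
  induction s using Multiset.induction_on with
  | empty => simp
  | cons c s ih =>
      simp only [Multiset.map_cons, Multiset.sum_cons, Multiset.card_cons, ih]
      push_cast
      ring

/-- the variance identity -/
lemma variance_id (s : Multiset ℝ) (a : ℝ) :
    (Multiset.card (a ::ₘ s) : ℝ) * ((a ::ₘ s).map (fun r => r^2)).sum - (a ::ₘ s).sum ^ 2
      = ((Multiset.card s : ℝ) * (s.map (fun r => r^2)).sum - s.sum ^ 2)
        + (s.map (fun b => (a - b)^2)).sum := by
  rw [sq_sum_aux s a]
  simp [Multiset.sum_cons, Multiset.card_cons]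
  push_cast
  ring

lemma variance (s : Multiset ℝ) :
    s.sum ^ 2 ≤ (Multiset.card s : ℝ) * (s.map (fun r => r^2)).sum ∧
    ((Multiset.card s : ℝ) * (s.map (fun r => r^2)).sum = s.sum ^ 2 ↔ Const s) := by
  induction s using Multiset.induction_on with
  | empty => simp [Const]
  | cons a s ih =>
      obtain ⟨ih1, ih2⟩ := ih
      have key := variance_id s a
      have hnn := sum_map_sq_nonneg s (fun b => a - b)
      constructor
      · nlinarith
      constructor
      · intro h
        rw [h] at key
        have hD : (Multiset.card s : ℝ) * (s.map (fun r => r^2)).sum - s.sum ^ 2 = 0 := by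
          nlinarith
        have hS : (s.map (fun b => (a - b)^2)).sum = 0 := by linarith
        have hab : ∀ b ∈ s, a - b = 0 := sum_sq_eq_zero hS
        have hconst : Const s := ih2.1 (by linarith)
        intro x hx y hy
        rcases Multiset.mem_cons.1 hx with hx' | hx' <;>
          rcases Multiset.mem_cons.1 hy with hy' | hy'
        · rw [hx', hy']
        · have := hab y hy'; rw [hx']; linarith
        · have := hab x hx'; rw [hy']; linarith
        · exact hconst x hx' y hy' 
      · intro h
        have hconst : Const s := fun x hx y hy =>
          h x (Multiset.mem_cons_of_mem hx) y (Multiset.mem_cons_of_mem hy)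
        have hD : (Multiset.card s : ℝ) * (s.map (fun r => r^2)).sum - s.sum ^ 2 = 0 := by
          have := ih2.2 hconst; linarith
        have hS : (s.map (fun b => (a - b)^2)).sum = 0 := by
          have : ∀ x ∈ s.map (fun b => (a - b)^2), x = 0 := by
            intro x hx
            obtain ⟨b, hb, rfl⟩ := Multiset.mem_map.1 hx
            have : a = b := h a (Multiset.mem_cons_self a s) b (Multiset.mem_cons_of_mem hb)
            simp [this]
          exact Multiset.sum_eq_zero this
        nlinarith

lemma esymm_two (s : Multiset ℝ) :
    s.sum ^ 2 = (s.map (fun r => r^2)).sum + 2 * s.esymm 2 := by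
  induction s using Multiset.induction_on with
  | empty => simp [Multiset.esymm, Multiset.powersetCard_eq_empty 2 (s := (0 : Multiset ℝ)) (by simp)]
  | cons a s ih =>
      have h2 : (a ::ₘ s).esymm 2 = s.esymm 2 + a * s.esymm 1 := esymm_cons a s 1
      rw [Multiset.sum_cons, Multiset.map_cons, Multiset.sum_cons, h2, esymm_one']
      nlinarith [ih]

lemma two_mul_choose_two (n : ℕ) : (n.choose 2 : ℝ) * 2 = n * ((n:ℝ) - 1) := by
  rcases n with _ | m
  · simp
  · have hdvd : 2 ∣ (m+1)*m := by
      rw [Nat.mul_comm]; exact (Nat.even_mul_succ_self m).two_dvd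
    have h : (m+1).choose 2 * 2 = (m+1)*m := by
      rw [Nat.choose_two_right]
      simpa using Nat.div_mul_cancel hdvd
    have h2 : (((m+1).choose 2 : ℕ) : ℝ) * 2 = (((m+1)*m : ℕ) : ℝ) := by
      exact_mod_cast congrArg (Nat.cast (R := ℝ)) h
    push_cast at h2 ⊢
    linarith

lemma newton1 {s : Multiset ℝ} {n : ℕ} (hc : Multiset.card s = n) (hn : 2 ≤ n) :
    H n 2 s * H n 0 s ≤ H n 1 s ^ 2 ∧
      (H n 2 s * H n 0 s = H n 1 s ^ 2 ↔ Const s) := by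
  have hv := variance s
  rw [hc] at hv
  have hn0 : (0:ℝ) < n := by exact_mod_cast Nat.lt_of_lt_of_le Nat.zero_lt_two hn
  have hn1 : (0:ℝ) < (n:ℝ) - 1 := by
    have : (2:ℝ) ≤ n := by exact_mod_cast hn
    linarith
  have he2 : s.esymm 2 = (s.sum ^ 2 - (s.map (fun r => r^2)).sum) / 2 := by
    have := esymm_two s; linarith
  have hC : (n.choose 2 : ℝ) = (n:ℝ) * ((n:ℝ)-1) / 2 := by
    linarith [two_mul_choose_two n]
  have h1 : H n 1 s = s.sum / (n:ℝ) := by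
    rw [H, esymm_one', Nat.choose_one_right]
  have h0 : H n 0 s = 1 := by
    rw [H, esymm_zero', Nat.choose_zero_right]; simp
  have h2 : H n 2 s = (s.sum ^ 2 - (s.map (fun r => r^2)).sum) / ((n:ℝ)*((n:ℝ)-1)) := by
    rw [H, he2, hC]
    field_simp
  have key : H n 1 s ^ 2 - H n 2 s * H n 0 s
      = ((n:ℝ) * (s.map (fun r => r^2)).sum - s.sum ^ 2) / ((n:ℝ)^2*((n:ℝ)-1)) := by
    rw [h1, h2, h0]
    field_simp
    ring
  have hdenom : (0:ℝ) < (n:ℝ)^2*((n:ℝ)-1) := mul_pos (pow_pos hn0 2) hn1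
  constructor
  · have : 0 ≤ ((n:ℝ) * (s.map (fun r => r^2)).sum - s.sum ^ 2) / ((n:ℝ)^2*((n:ℝ)-1)) :=
      div_nonneg (by linarith [hv.1]) (le_of_lt hdenom)
    linarith [key]
  · rw [← hv.2]
    constructor
    · intro h
      have hz : ((n:ℝ) * (s.map (fun r => r^2)).sum - s.sum ^ 2) / ((n:ℝ)^2*((n:ℝ)-1)) = 0 := by
        linarith [key]
      have := (div_eq_zero_iff.1 hz).resolve_right (ne_of_gt hdenom)
      linarith
    · intro h
      have hz : ((n:ℝ) * (s.map (fun r => r^2)).sum - s.sum ^ 2) = 0 := by linarith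
      rw [hz, zero_div] at key
      linarith

lemma esymm_inv (s : Multiset ℝ) :
    (0:ℝ) ∉ s → ∀ k ≤ Multiset.card s,
      s.prod * (s.map (fun r => r⁻¹)).esymm k = s.esymm (Multiset.card s - k) := by
  induction s using Multiset.induction_on with
  | empty =>
      intro _ k hk
      have hk0 : k = 0 := by simpa using hk
      subst hk0
      simp [esymm_zero']
  | cons a s ih =>
      intro h0 k hk
      have ha : a ≠ 0 := fun h => h0 (by rw [← h] at *; exact Multiset.mem_cons_self a s)
      have h0' : (0:ℝ) ∉ s := fun h => h0 (Multiset.mem_cons_of_mem h)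
      rw [Multiset.card_cons] at hk ⊢
      rcases Nat.eq_zero_or_pos k with rfl | hkpos
      · rw [esymm_zero', mul_one, Nat.sub_zero, ← Multiset.card_cons a s, esymm_card]
      obtain ⟨k', rfl⟩ : ∃ k', k = k' + 1 := ⟨k - 1, by omega⟩
      rw [Multiset.map_cons, esymm_cons, Multiset.prod_cons]
      rcases Nat.lt_or_ge k' (Multiset.card s) with hlt | hge
      · have i1 := ih h0' (k' + 1) hlt
        have i2 := ih h0' k' (le_of_lt hlt)
        have hsub : Multiset.card s + 1 - (k' + 1) = (Multiset.card s - (k' + 1)) + 1 := by omega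
        rw [hsub, esymm_cons]
        have hsub2 : Multiset.card s - (k' + 1) + 1 = Multiset.card s - k' := by omega
        rw [hsub2]
        have hAA : a * a⁻¹ = 1 := mul_inv_cancel₀ ha
        calc a * s.prod * ((s.map (fun r => r⁻¹)).esymm (k' + 1)
                + a⁻¹ * (s.map (fun r => r⁻¹)).esymm k')
            = a * (s.prod * (s.map (fun r => r⁻¹)).esymm (k' + 1))
              + (a * a⁻¹) * (s.prod * (s.map (fun r => r⁻¹)).esymm k') := by ring
          _ = a * s.esymm (Multiset.card s - (k' + 1))
              + 1 * s.esymm (Multiset.card s - k') := by rw [i1, i2, hAA]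
          _ = s.esymm (Multiset.card s - k') + a * s.esymm (Multiset.card s - (k' + 1)) := by
              ring
      · have hk'e : k' = Multiset.card s := by omega
        subst hk'e
        have hz : (s.map (fun r => r⁻¹)).esymm (Multiset.card s + 1) = 0 :=
          esymm_of_card_lt (by simp)
        have i2 := ih h0' (Multiset.card s) le_rfl
        rw [Nat.sub_self, esymm_zero'] at i2
        have hAA : a * a⁻¹ = 1 := mul_inv_cancel₀ ha
        have hs0 : Multiset.card s + 1 - (Multiset.card s + 1) = 0 := by omega
        rw [hz, hs0, esymm_zero']
        calc a * s.prod * (0 + a⁻¹ * (s.map (fun r => r⁻¹)).esymm (Multiset.card s))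
            = (a * a⁻¹) * (s.prod * (s.map (fun r => r⁻¹)).esymm (Multiset.card s)) := by ring
          _ = 1 := by rw [i2, hAA]; ring

lemma newton_top {s : Multiset ℝ} {m : ℕ} (hc : Multiset.card s = m) (hm : 2 ≤ m)
    (hpos : ∀ i, 1 ≤ i → i ≤ m → 0 < s.esymm i) :
    H m (m-2) s * H m m s ≤ H m (m-1) s ^ 2 ∧
      (H m (m-2) s * H m m s = H m (m-1) s ^ 2 ↔ Const s) := by
  have hP : 0 < s.prod := by
    rw [← esymm_card s, hc]; exact hpos m (by omega) le_rfl
  have h0 : (0:ℝ) ∉ s := fun h => by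
    rw [Multiset.prod_eq_zero h] at hP; exact lt_irrefl _ hP
  set t := s.map (fun r => r⁻¹) with ht
  have hct : Multiset.card t = m := by rw [ht, Multiset.card_map, hc]
  have hinv : ∀ k ≤ m, t.esymm k = s.esymm (m - k) / s.prod := by
    intro k hk
    have := esymm_inv s h0 k (by omega)
    rw [hc] at this
    rw [eq_div_iff (ne_of_gt hP), ← this, ht]
    ring
  have hHmm : 0 < H m m s := by
    rw [H, ← hc, esymm_card, Nat.choose_self]; simpa using hP
  have hne : H m m s ≠ 0 := ne_of_gt hHmm
  have hHt : ∀ k ≤ m, H m k t = H m (m - k) s / H m m s := by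
    intro k hk
    have hmm : H m m s = s.prod := by
      rw [H, ← hc, esymm_card, Nat.choose_self]; simp
    rw [H, H, hinv k hk, hmm, Nat.choose_symm hk]
    field_simp
  have hnew := newton1 hct hm
  have e0 : H m 0 t = 1 := by
    rw [hHt 0 (by omega), Nat.sub_zero, div_self hne]
  have e1 : H m 1 t = H m (m-1) s / H m m s := hHt 1 (by omega)
  have e2 : H m 2 t = H m (m-2) s / H m m s := hHt 2 hm
  have hConst : Const t ↔ Const s := by
    constructor
    · intro h a ha b hb
      exact inv_injective
        (h a⁻¹ (Multiset.mem_map_of_mem _ ha) b⁻¹ (Multiset.mem_map_of_mem _ hb))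
    · intro h a ha b hb
      obtain ⟨a', ha', rfl⟩ := Multiset.mem_map.1 ha
      obtain ⟨b', hb', rfl⟩ := Multiset.mem_map.1 hb
      rw [h a' ha' b' hb']
  rw [e0, e1, e2, hConst, mul_one] at hnew
  obtain ⟨hle, hiff⟩ := hnew
  set X := H m (m-2) s
  set Y := H m (m-1) s
  set Z := H m m s
  have hiff2 : X / Z = (Y / Z) ^ 2 ↔ X * Z = Y ^ 2 := by
    rw [div_pow, div_eq_div_iff hne (pow_ne_zero 2 hne)]
    constructor
    · intro h
      apply mul_right_cancel₀ hne
      calc X * Z * Z = X * Z ^ 2 := by ring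
        _ = Y ^ 2 * Z := h
    · intro h
      calc X * Z ^ 2 = (X * Z) * Z := by ring
        _ = Y ^ 2 * Z := by rw [h]
  constructor
  · have h' := mul_le_mul_of_nonneg_left hle (le_of_lt (mul_pos hHmm hHmm))
    calc X * Z = Z * Z * (X / Z) := by field_simp
      _ ≤ Z * Z * ((Y / Z) ^ 2) := h'
      _ = Y ^ 2 := by field_simp
  · rw [← hiff, hiff2]

lemma deriv_step (s : Multiset ℝ) (n : ℕ) (hc : Multiset.card s = n + 1) :
    ∃ t : Multiset ℝ, Multiset.card t = n ∧
      ∀ j ≤ n, ((n:ℝ) + 1) * t.esymm j = ((n:ℝ) + 1 - j) * s.esymm j := by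
  classical
  set p : ℝ[X] := (s.map (fun a => X + C a)).prod with hp
  have hmem : ∀ f ∈ s.map (fun a => X + C a), f.Monic := by
    intro f hf
    obtain ⟨a, _, rfl⟩ := Multiset.mem_map.1 hf
    exact monic_X_add_C a
  have hmonic : p.Monic := monic_multiset_prod_of_monic _ _ (fun a _ => monic_X_add_C a)
  have hdeg : p.natDegree = n + 1 := by
    rw [hp, natDegree_multiset_prod_of_monic _ hmem, Multiset.map_map]
    simp only [Function.comp_def]
    rw [Multiset.map_congr rfl (fun a _ => natDegree_X_add_C a)]
    simp [hc, Nat.add_comm]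
  have hroots : p.roots = s.map Neg.neg := by
    have h2 : p = ((s.map Neg.neg).map (fun a => X - C a)).prod := by
      rw [hp, Multiset.map_map]
      apply congrArg
      apply Multiset.map_congr rfl
      intro a _
      simp [sub_neg_eq_add]
    rw [h2, roots_multiset_prod_X_sub_C]
  have hcroots : Multiset.card p.roots = n + 1 := by rw [hroots, Multiset.card_map, hc]
  set q : ℝ[X] := derivative p with hq
  have hqcoeffn : q.coeff n = (n : ℝ) + 1 := by
    rw [hq, coeff_derivative]
    have h3 : p.coeff (n + 1) = 1 := by
      rw [← hdeg]; exact hmonic.coeff_natDegree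
    rw [h3, one_mul]
  have hqdegle : q.natDegree ≤ n := by
    have := natDegree_derivative_le p
    rw [hdeg, ← hq] at this
    omega
  have hqcard_ge : n ≤ Multiset.card q.roots := by
    have h4 := p.card_roots_le_derivative
    rw [hcroots, ← hq] at h4
    omega
  have hqcard_le : Multiset.card q.roots ≤ q.natDegree := card_roots' q
  have hqcard : Multiset.card q.roots = n := le_antisymm (le_trans hqcard_le hqdegle) hqcard_ge
  have hqdeg : q.natDegree = n := le_antisymm hqdegle (le_trans hqcard_ge hqcard_le)
  have hqlead : q.leadingCoeff = (n:ℝ) + 1 := by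
    rw [leadingCoeff, hqdeg, hqcoeffn]
  refine ⟨q.roots.map Neg.neg, by rw [Multiset.card_map, hqcard], ?_⟩
  intro j hj
  have hcoeffq : q.coeff (n - j) = ((n:ℝ)+1) * (q.roots.map Neg.neg).esymm j := by
    have h1 := Polynomial.coeff_eq_esymm_roots_of_card (p := q) (by rw [hqcard, hqdeg])
      (k := n - j) (by rw [hqdeg]; omega)
    rw [hqdeg] at h1
    have hnj : n - (n - j) = j := by omega
    rw [hnj] at h1
    rw [h1, hqlead, Multiset.esymm_neg]
    ring
  have hcoeffp : p.coeff (n + 1 - j) = s.esymm j := by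
    have h1 := Polynomial.coeff_eq_esymm_roots_of_card (p := p) (by rw [hcroots, hdeg])
      (k := n + 1 - j) (by rw [hdeg]; omega)
    rw [hdeg] at h1
    have hnj : n + 1 - (n + 1 - j) = j := by omega
    rw [hnj] at h1
    rw [h1, hmonic.leadingCoeff, one_mul, hroots, Multiset.esymm_neg, ← mul_assoc,
      ← pow_add, show j + j = 2 * j by ring, pow_mul]
    norm_num
  have hcoeffq2 : q.coeff (n - j) = p.coeff (n + 1 - j) * ((n:ℝ) - j + 1) := by
    rw [hq, coeff_derivative]
    have h5 : n - j + 1 = n + 1 - j := by omega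
    rw [h5]
    have hcast : ((n - j : ℕ) : ℝ) = (n:ℝ) - j := by
      push_cast [Nat.cast_sub hj]; ring
    rw [hcast]
  rw [hcoeffq2, hcoeffp] at hcoeffq
  rw [← hcoeffq]
  ring

lemma choose_identity (n j : ℕ) (hj : j ≤ n) :
    (n + 1 - j) * ((n+1).choose j) = (n + 1) * n.choose j := by
  have h := Nat.add_one_mul_choose_eq n (n - j)
  rw [Nat.choose_symm hj,
    show n - j + 1 = n + 1 - j by omega,
    Nat.choose_symm (by omega : j ≤ n + 1)] at h
  rw [Nat.mul_comm]
  exact h.symm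

lemma deriv_H (s : Multiset ℝ) (n : ℕ) (hc : Multiset.card s = n + 1) :
    ∃ t : Multiset ℝ, Multiset.card t = n ∧ ∀ j ≤ n, H n j t = H (n+1) j s := by
  obtain ⟨t, hct, hE⟩ := deriv_step s n hc
  refine ⟨t, hct, fun j hj => ?_⟩
  have hch : ((n + 1 - j) * ((n+1).choose j) : ℕ) = ((n + 1) * n.choose j : ℕ) :=
    choose_identity n j hj
  have hch' : ((n:ℝ) + 1 - j) * (((n+1).choose j : ℕ) : ℝ) = ((n:ℝ) + 1) * (n.choose j : ℝ) := by
    have := congrArg (fun z : ℕ => (z:ℝ)) hch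
    push_cast [Nat.cast_sub (by omega : j ≤ n + 1)] at this
    convert this using 2 <;> push_cast <;> ring_nf
  have hcn : (0:ℝ) < (n.choose j : ℝ) := by exact_mod_cast Nat.choose_pos hj
  have hcn1 : (0:ℝ) < (((n+1).choose j : ℕ) : ℝ) := by
    exact_mod_cast Nat.choose_pos (by omega : j ≤ n + 1)
  have hE' := hE j hj
  rw [H, H, div_eq_div_iff (ne_of_gt hcn) (ne_of_gt hcn1)]
  apply mul_left_cancel₀ (show ((n:ℝ)+1) ≠ 0 by positivity)
  linear_combination hE' * (((n+1).choose j : ℕ) : ℝ) + hch' * s.esymm j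

lemma const_exists {s : Multiset ℝ} {n : ℕ} (hc : Multiset.card s = n) (hn : 0 < n)
    (h : Const s) : ∃ c, s = Multiset.replicate n c := by
  obtain ⟨a, ha⟩ := Multiset.card_pos_iff_exists_mem.1 (by rw [hc]; exact hn)
  exact ⟨a, Multiset.eq_replicate.2 ⟨hc, fun b hb => h b hb a ha⟩⟩

lemma newton (j : ℕ) (hj : 1 ≤ j) :
    ∀ n, j + 1 ≤ n → ∀ s : Multiset ℝ, Multiset.card s = n →
      (∀ i, 1 ≤ i → i ≤ j + 1 → 0 < s.esymm i) →
      H n (j-1) s * H n (j+1) s ≤ H n j s ^ 2 ∧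
        (H n (j-1) s * H n (j+1) s = H n j s ^ 2 ↔ Const s) := by
  intro n hn'
  induction n, hn' using Nat.le_induction with
  | base =>
      intro s hc hpos
      have hm : 2 ≤ j + 1 := by omega
      have h := newton_top hc hm hpos
      rw [show j + 1 - 2 = j - 1 by omega, show j + 1 - 1 = j by omega] at h
      exact h
  | succ n hn ih =>
      intro s hc hpos
      obtain ⟨t, hct, hH⟩ := deriv_H s n hc
      have hposH : ∀ i, 1 ≤ i → i ≤ j + 1 → 0 < H (n+1) i s := by
        intro i h1 h2
        exact div_pos (hpos i h1 h2)
          (by exact_mod_cast Nat.choose_pos (by omega : i ≤ n + 1))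
      have hpost : ∀ i, 1 ≤ i → i ≤ j + 1 → 0 < t.esymm i := by
        intro i h1 h2
        have hin : i ≤ n := by omega
        have hs : 0 < H n i t := by rw [hH i hin]; exact hposH i h1 h2
        have hcpos : (0:ℝ) < (n.choose i : ℝ) := by exact_mod_cast Nat.choose_pos hin
        have h3 : 0 < H n i t * (n.choose i : ℝ) := mul_pos hs hcpos
        rwa [H, div_mul_cancel₀ _ (ne_of_gt hcpos)] at h3
      obtain ⟨ihle, ihiff⟩ := ih t hct hpost
      have e1 : H n (j-1) t = H (n+1) (j-1) s := hH (j-1) (by omega)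
      have e2 : H n j t = H (n+1) j s := hH j (by omega)
      have e3 : H n (j+1) t = H (n+1) (j+1) s := hH (j+1) hn
      rw [e1, e2, e3] at ihle ihiff
      refine ⟨ihle, ?_, ?_⟩
      · intro h
        have hconstt : Const t := ihiff.1 h
        obtain ⟨c, hrep⟩ := const_exists hct (by omega) hconstt
        have h1s : H (n+1) 1 s = c := by
          rw [← hH 1 (by omega), hrep, H_replicate c (by omega)]; ring
        have h2s : H (n+1) 2 s = c ^ 2 := by
          rw [← hH 2 (by omega), hrep, H_replicate c (by omega)]
        have h0s : H (n+1) 0 s = 1 := by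
          rw [H, esymm_zero', Nat.choose_zero_right]; norm_num
        exact (newton1 hc (by omega)).2.1 (by rw [h0s, h1s, h2s]; ring)
      · intro hconst
        obtain ⟨c, hrep⟩ := const_exists hc (by omega) hconst
        rw [hrep, H_replicate c (by omega), H_replicate c (by omega),
          H_replicate c (by omega), ← pow_add, ← pow_mul]
        congr 1
        omega

lemma chain (n l : ℕ) (hl : 1 ≤ l) :
    ∀ k, l + 1 ≤ k → k ≤ n → ∀ s : Multiset ℝ, Multiset.card s = n →
      (∀ i, 1 ≤ i → i ≤ k → 0 < s.esymm i) →
      H n k s * H n (l-1) s ≤ H n (k-1) s * H n l s ∧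
        (H n (k-1) s * H n l s = H n k s * H n (l-1) s ↔ Const s) := by
  intro k hk'
  induction k, hk' using Nat.le_induction with
  | base =>
      intro hkn s hc hpos
      have h := newton l hl n hkn s hc hpos
      rw [show l + 1 - 1 = l by omega]
      constructor
      · have h1 := h.1
        rw [sq] at h1
        nlinarith [h1]
      · rw [← h.2]
        constructor
        · intro hh; linear_combination -hh
        · intro hh; linear_combination -hh
  | succ k hk ihk =>
      intro hkn s hc hpos
      have hposk : ∀ i, 1 ≤ i → i ≤ k → 0 < s.esymm i := fun i h1 h2 => hpos i h1 (by omega)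
      obtain ⟨Ale, Aiff⟩ := ihk (by omega) s hc hposk
      obtain ⟨Nle, Niff⟩ := newton k (by omega) n (by omega) s hc hpos
      have hH : ∀ i, i ≤ k + 1 → 0 < H n i s := by
        intro i hi
        rcases Nat.eq_zero_or_pos i with rfl | hipos
        · rw [H, esymm_zero', Nat.choose_zero_right]; norm_num
        · exact div_pos (hpos i hipos hi)
            (by exact_mod_cast Nat.choose_pos (by omega : i ≤ n))
      have ha := hH (k-1) (by omega)
      have hb := hH k (by omega)
      have hd := hH (l-1) (by omega)
      have he := hH l (by omega)
      rw [show k + 1 - 1 = k by omega]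
      have h2 : H n k s * (H n k s * H n (l-1) s) ≤ H n k s * (H n (k-1) s * H n l s) :=
        mul_le_mul_of_nonneg_left Ale (le_of_lt hb)
      constructor
      · have h1 : (H n (k-1) s * H n (k+1) s) * H n (l-1) s ≤ H n k s ^ 2 * H n (l-1) s :=
          mul_le_mul_of_nonneg_right Nle (le_of_lt hd)
        apply le_of_mul_le_mul_left _ ha
        calc H n (k-1) s * (H n (k+1) s * H n (l-1) s)
            = (H n (k-1) s * H n (k+1) s) * H n (l-1) s := by ring
          _ ≤ H n k s ^ 2 * H n (l-1) s := h1
          _ = H n k s * (H n k s * H n (l-1) s) := by ring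
          _ ≤ H n k s * (H n (k-1) s * H n l s) := h2
          _ = H n (k-1) s * (H n k s * H n l s) := by ring
      · constructor
        · intro h
          have hNeq : H n (k-1) s * H n (k+1) s = H n k s ^ 2 := by
            by_contra hne
            have hlt : H n (k-1) s * H n (k+1) s < H n k s ^ 2 := lt_of_le_of_ne Nle hne
            have hlt2 : H n (k-1) s * (H n (k+1) s * H n (l-1) s)
                < H n (k-1) s * (H n k s * H n l s) := by
              calc H n (k-1) s * (H n (k+1) s * H n (l-1) s)
                  = (H n (k-1) s * H n (k+1) s) * H n (l-1) s := by ring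
                _ < H n k s ^ 2 * H n (l-1) s := mul_lt_mul_of_pos_right hlt hd
                _ = H n k s * (H n k s * H n (l-1) s) := by ring
                _ ≤ H n k s * (H n (k-1) s * H n l s) := h2
                _ = H n (k-1) s * (H n k s * H n l s) := by ring
            have := lt_of_mul_lt_mul_left hlt2 (le_of_lt ha)
            rw [h] at this
            exact lt_irrefl _ this
          exact Niff.1 hNeq
        · intro hconst
          obtain ⟨c, hrep⟩ := const_exists hc (by omega) hconst
          rw [hrep, H_replicate c (by omega), H_replicate c (by omega),
            H_replicate c (by omega), H_replicate c (by omega), ← pow_add, ← pow_add]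
          congr 1
          omega

end NM

/-- Newton–Maclaurin inequality (ratio form): for `1 ≤ l < k ≤ n` and `λ ∈ Γ_k⁺`,
`H_{k-1}(λ) H_l(λ) ≥ H_k(λ) H_{l-1}(λ)`, with equality iff `λ = c(1,…,1)` for some
`c > 0`. -/
theorem stmt3 (n k l : ℕ) (hl : 1 ≤ l) (hlk : l < k) (hkn : k ≤ n)
    (x : Fin n → ℝ) (hx : x ∈ GardingCone n k) :
    Hnorm n (k-1) x * Hnorm n l x ≥ Hnorm n k x * Hnorm n (l-1) x ∧
    (Hnorm n (k-1) x * Hnorm n l x = Hnorm n k x * Hnorm n (l-1) x ↔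
      ∃ c : ℝ, 0 < c ∧ ∀ i, x i = c) := by
  set s := Multiset.map x Finset.univ.val with hs
  have hcard : Multiset.card s = n := by simp [hs]
  have hsig : ∀ i, sigmaE n i x = s.esymm i := fun i =>
    (Finset.esymm_map_val x Finset.univ i).symm
  have hpos : ∀ i, 1 ≤ i → i ≤ k → 0 < s.esymm i := fun i h1 h2 => by
    rw [← hsig i]; exact hx i h1 h2
  have hHn : ∀ i, Hnorm n i x = NM.H n i s := fun i => by rw [Hnorm, NM.H, hsig i]
  obtain ⟨hle, hiff⟩ := NM.chain n l hl k hlk hkn s hcard hpos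
  have hCiff : NM.Const s ↔ ∃ c : ℝ, 0 < c ∧ ∀ i, x i = c := by
    constructor
    · intro h
      have i0 : Fin n := ⟨0, by omega⟩
      have hmem : ∀ i : Fin n, x i ∈ s := fun i =>
        Multiset.mem_map.2 ⟨i, Finset.mem_def.1 (Finset.mem_univ i), rfl⟩
      have hall : ∀ i, x i = x i0 := fun i => h (x i) (hmem i) (x i0) (hmem i0)
      have h1 := hx 1 le_rfl (by omega)
      rw [hsig 1, NM.esymm_one'] at h1
      have hsum : s.sum = ∑ i, x i := rfl
      have hsum2 : ∑ i, x i = (n : ℝ) * x i0 := by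
        rw [Finset.sum_congr rfl (fun i _ => hall i), Finset.sum_const, Finset.card_univ]
        simp [nsmul_eq_mul]
      rw [hsum, hsum2] at h1
      have hn0 : (0:ℝ) < n := by
        have : 0 < n := by omega
        exact_mod_cast this
      have hcpos : 0 < x i0 := by nlinarith
      exact ⟨x i0, hcpos, hall⟩
    · rintro ⟨c, hc, hall⟩ a ha b hb
      obtain ⟨i, _, rfl⟩ := Multiset.mem_map.1 ha
      obtain ⟨i2, _, rfl⟩ := Multiset.mem_map.1 hb
      rw [hall i, hall i2]
  constructor
  · rw [ge_iff_le, hHn, hHn, hHn, hHn]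
    exact hle
  · rw [hHn, hHn, hHn, hHn, hiff, hCiff]
end

section
/- Let κ ∈ ℝ^n with κ - ε := (κ_1-ε,…,κ_n-ε) ∈ Γ_k^+, and let 1 ≤ i < j ≤ k and 1 ≤ p ≤ n. Then (j-1) H_{j-2;p}(κ-ε) H_i(κ-ε) > (i-1) H_j(κ-ε) H_{i-2;p}(κ-ε) whenever j ≥ 2, where H_{m;p} denotes the normalized mth elementary symmetric polynomial of the (n-1) variables obtained by deleting the pth entry (with the convention H_{-1;p} = 0, H_{0;p} = 1). -/
set_option maxHeartbeats 1000000


/-- The `m`-th elementary symmetric polynomial of the `n-1` variables obtained by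
deleting the `p`-th entry of `x`. -/
noncomputable def sigmaDel (n m : ℕ) (p : Fin n) (x : Fin n → ℝ) : ℝ :=
  ∑ s ∈ Finset.powersetCard m ((Finset.univ : Finset (Fin n)).erase p), ∏ i ∈ s, x i

/-- The normalized version `H_{m;p} = σ_{m;p} / C(n-1,m)`. -/
noncomputable def HnormDel (n m : ℕ) (p : Fin n) (x : Fin n → ℝ) : ℝ :=
  sigmaDel n m p x / ((n-1).choose m)

open Finset Polynomial

namespace Stmt7Aux

lemma esymm_zero' (s : Multiset ℝ) : s.esymm 0 = 1 := by
  simp [Multiset.esymm]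

lemma esymm_one' (s : Multiset ℝ) : s.esymm 1 = s.sum := by
  rw [Multiset.esymm, Multiset.powersetCard_one, Multiset.map_map]
  simp

lemma esymm_cons (a : ℝ) (s : Multiset ℝ) (k : ℕ) :
    (a ::ₘ s).esymm (k+1) = s.esymm (k+1) + a * s.esymm k := by
  rw [Multiset.esymm, Multiset.powersetCard_cons, Multiset.map_add, Multiset.sum_add,
    Multiset.map_map]
  congr 1
  have h1 : (Multiset.prod ∘ Multiset.cons a) = fun t : Multiset ℝ => a * t.prod := by
    funext t; simp
  rw [h1, Multiset.sum_map_mul_left]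
  rfl

lemma sigmaE_eq_esymm (n k : ℕ) (x : Fin n → ℝ) :
    sigmaE n k x = ((Finset.univ.val.map x).esymm k) := by
  rw [Finset.esymm_map_val]; rfl

lemma sigmaDel_eq_esymm (n m : ℕ) (p : Fin n) (x : Fin n → ℝ) :
    sigmaDel n m p x = ((((Finset.univ : Finset (Fin n)).erase p).val.map x).esymm m) := by
  rw [Finset.esymm_map_val]; rfl

lemma card_del (n : ℕ) (p : Fin n) (x : Fin n → ℝ) :
    Multiset.card ((((Finset.univ : Finset (Fin n)).erase p).val.map x)) = n - 1 := by
  rw [Multiset.card_map]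
  have : ((Finset.univ : Finset (Fin n)).erase p).card = n - 1 := by
    rw [Finset.card_erase_of_mem (Finset.mem_univ p), Finset.card_univ, Fintype.card_fin]
  exact this

lemma sigmaE_zero (n : ℕ) (x : Fin n → ℝ) : sigmaE n 0 x = 1 := by
  rw [sigmaE_eq_esymm, esymm_zero']

lemma sigmaDel_zero (n : ℕ) (p : Fin n) (x : Fin n → ℝ) : sigmaDel n 0 p x = 1 := by
  rw [sigmaDel_eq_esymm, esymm_zero']

lemma sigmaDel_high (n m : ℕ) (p : Fin n) (x : Fin n → ℝ) (h : n ≤ m) :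
    sigmaDel n m p x = 0 := by
  have hn : 1 ≤ n := p.pos
  have hc : ((Finset.univ : Finset (Fin n)).erase p).card < m := by
    rw [Finset.card_erase_of_mem (Finset.mem_univ p), Finset.card_univ, Fintype.card_fin]
    omega
  rw [sigmaDel, Finset.powersetCard_eq_empty.mpr hc, Finset.sum_empty]

lemma exists_fn (s : Multiset ℝ) :
    ∃ f : Fin (Multiset.card s) → ℝ, (Finset.univ.val.map f) = s := by
  have h : Multiset.card s = s.toList.length := (Multiset.length_toList s).symm
  refine ⟨fun i => s.toList.get (Fin.cast h i), ?_⟩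
  rw [Fin.univ_val_map, ← List.ofFn_congr h.symm s.toList.get, List.ofFn_get,
    Multiset.coe_toList]

/-- deletion identity -/
lemma sigma_del_rec (n m : ℕ) (p : Fin n) (x : Fin n → ℝ) :
    sigmaE n (m+1) x = sigmaDel n (m+1) p x + x p * sigmaDel n m p x := by
  rw [sigmaE_eq_esymm, sigmaDel_eq_esymm, sigmaDel_eq_esymm]
  have h1 : (Finset.univ : Finset (Fin n)).val
      = p ::ₘ ((Finset.univ : Finset (Fin n)).erase p).val := by
    rw [Finset.erase_val, Multiset.cons_erase (Finset.mem_univ_val p)]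
  rw [h1, Multiset.map_cons, esymm_cons]

lemma sum_sq_identity (s : Multiset ℝ) :
    s.sum^2 = (s.map (fun a => a^2)).sum + 2 * s.esymm 2 := by
  induction s using Multiset.induction_on with
  | empty => simp [Multiset.esymm, Multiset.powersetCard_eq_empty 2 (by simp : Multiset.card (0 : Multiset ℝ) < 2)]
  | cons a s ih =>
    rw [Multiset.sum_cons, Multiset.map_cons, Multiset.sum_cons,
      show (2:ℕ) = 1+1 from rfl, esymm_cons, esymm_one']
    linear_combination ih

lemma cs_ms (s : Multiset ℝ) :
    s.sum^2 ≤ (Multiset.card s) * (s.map (fun a => a^2)).sum := by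
  induction s using Multiset.induction_on with
  | empty => simp
  | cons a s ih =>
    rw [Multiset.sum_cons, Multiset.map_cons, Multiset.sum_cons, Multiset.card_cons]
    push_cast
    have hsq : (0:ℝ) ≤ (s.map (fun a => a^2)).sum := by
      apply Multiset.sum_nonneg
      intro t ht
      obtain ⟨u, _, rfl⟩ := Multiset.mem_map.mp ht
      positivity
    rcases Multiset.empty_or_exists_mem s with rfl | ⟨b, hb⟩
    · simp
    · have hd1 : (1:ℝ) ≤ (Multiset.card s : ℝ) := by
        have hne : s ≠ 0 := fun h => by subst h; exact absurd hb (Multiset.notMem_zero b)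
        exact_mod_cast Multiset.card_pos.mpr hne
      nlinarith [sq_nonneg ((Multiset.card s : ℝ) * a - s.sum), ih, hsq]

lemma newton_bottom (s : Multiset ℝ) :
    ((Multiset.card s).choose 1 : ℝ)^2 * (s.esymm 0 * s.esymm 2)
      ≤ ((Multiset.card s).choose 0 : ℝ) * ((Multiset.card s).choose 2 : ℝ) * (s.esymm 1)^2 := by
  rw [esymm_zero', esymm_one', Nat.choose_one_right, Nat.choose_zero_right,
    Nat.cast_choose_two]
  have h1 := sum_sq_identity s
  have h2 := cs_ms s
  have hd : (0:ℝ) ≤ (Multiset.card s : ℝ) := by positivity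
  nlinarith [mul_le_mul_of_nonneg_left h2 hd]

lemma sum_compl_prod (d k : ℕ) (y : Fin d → ℝ) (hk : k ≤ d) :
    ∑ s ∈ Finset.powersetCard k (Finset.univ : Finset (Fin d)), ∏ i ∈ sᶜ, y i
      = sigmaE d (d - k) y := by
  rw [sigmaE]
  refine Finset.sum_nbij' (fun s => sᶜ) (fun s => sᶜ) ?_ ?_ ?_ ?_ ?_
  · intro s hs
    rw [Finset.mem_powersetCard_univ] at hs ⊢
    rw [Finset.card_compl, hs, Fintype.card_fin]
  · intro s hs
    rw [Finset.mem_powersetCard_univ] at hs ⊢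
    rw [Finset.card_compl, hs, Fintype.card_fin]
    omega
  · intro s _; exact compl_compl s
  · intro s _; exact compl_compl s
  · intro s _; rfl

lemma sigmaE_self (d : ℕ) (y : Fin d → ℝ) : sigmaE d d y = ∏ i, y i := by
  have h := Finset.powersetCard_self (Finset.univ : Finset (Fin d))
  rw [Finset.card_univ, Fintype.card_fin] at h
  rw [sigmaE, h, Finset.sum_singleton]

lemma sigmaE_one (d : ℕ) (y : Fin d → ℝ) : sigmaE d 1 y = ∑ i, y i := by
  rw [sigmaE, Finset.powersetCard_one, Finset.sum_map]; simp

lemma sigmaE_zero' (d : ℕ) (y : Fin d → ℝ) : sigmaE d 0 y = 1 := by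
  simp [sigmaE]

lemma newton_top (d : ℕ) (y : Fin d → ℝ) (hd : 2 ≤ d) :
    ((d.choose (d-1)) : ℝ)^2 * (sigmaE d (d-2) y * sigmaE d d y)
      ≤ (d.choose (d-2) : ℝ) * (d.choose d : ℝ) * (sigmaE d (d-1) y)^2 := by
  set z : Fin d → ℝ := fun i => ∏ j ∈ (Finset.univ.erase i), y j with hz
  have hz1 : sigmaE d 1 z = sigmaE d (d-1) y := by
    rw [← sum_compl_prod d 1 y (by omega), sigmaE_one, Finset.powersetCard_one,
      Finset.sum_map]
    apply Finset.sum_congr rfl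
    intro i _
    rw [hz]
    simp [Finset.compl_singleton]
  have key : ∀ s ∈ Finset.powersetCard 2 (Finset.univ : Finset (Fin d)),
      ∏ i ∈ s, z i = (∏ i, y i) * ∏ i ∈ sᶜ, y i := by
    intro s hs
    obtain ⟨a, b, hab, rfl⟩ := Finset.card_eq_two.mp (Finset.mem_powersetCard_univ.mp hs)
    have hb : b ∈ Finset.univ.erase a := Finset.mem_erase.mpr ⟨Ne.symm hab, Finset.mem_univ b⟩
    have ha' : a ∈ Finset.univ.erase b := Finset.mem_erase.mpr ⟨hab, Finset.mem_univ a⟩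
    have h1 : ({a, b}ᶜ : Finset (Fin d)) = (Finset.univ.erase a).erase b := by
      rw [Finset.compl_insert, Finset.compl_singleton, Finset.erase_right_comm]
    rw [Finset.prod_pair hab, h1]
    have e1 : z a = y b * ∏ i ∈ (Finset.univ.erase a).erase b, y i :=
      (Finset.mul_prod_erase _ y hb).symm
    have e2 : (∏ i, y i) = y a * (y b * ∏ i ∈ (Finset.univ.erase a).erase b, y i) := by
      rw [Finset.mul_prod_erase _ y hb, Finset.mul_prod_erase _ y (Finset.mem_univ a)]
    have e3 : z b = y a * ∏ i ∈ (Finset.univ.erase a).erase b, y i := by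
      rw [hz]
      dsimp only
      rw [← Finset.mul_prod_erase _ y ha', Finset.erase_right_comm]
    rw [e1, e2, e3]
    ring
  have hz2 : sigmaE d 2 z = sigmaE d (d-2) y * sigmaE d d y := by
    rw [sigmaE, Finset.sum_congr rfl key, ← Finset.mul_sum, sum_compl_prod d 2 y (by omega),
      sigmaE_self]
    ring
  have hbot := newton_bottom (Finset.univ.val.map z)
  have hcard : Multiset.card (Finset.univ.val.map z) = d := by
    rw [Multiset.card_map]
    exact Finset.card_univ.trans (Fintype.card_fin d)
  rw [hcard, ← sigmaE_eq_esymm, ← sigmaE_eq_esymm, ← sigmaE_eq_esymm] at hbot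
  rw [sigmaE_zero', hz1, hz2] at hbot
  have c1 : d.choose (d-1) = d.choose 1 := by
    rw [← Nat.choose_symm (by omega : 1 ≤ d)]
  have c2 : d.choose (d-2) = d.choose 2 := by
    rw [← Nat.choose_symm (by omega : 2 ≤ d)]
  have c3 : d.choose d = d.choose 0 := by
    rw [← Nat.choose_symm (by omega : 0 ≤ d)]
    simp
  rw [c1, c2, c3]
  linarith [hbot]

lemma newton_top_ms (w : Multiset ℝ) (r : ℕ) (hw : Multiset.card w = r + 2) :
    ((r+2).choose (r+1) : ℝ)^2 * (w.esymm r * w.esymm (r+2))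
      ≤ ((r+2).choose r : ℝ) * ((r+2).choose (r+2) : ℝ) * (w.esymm (r+1))^2 := by
  obtain ⟨f, hf⟩ := exists_fn w
  have hconv : ∀ j, sigmaE (Multiset.card w) j f = w.esymm j := by
    intro j; rw [sigmaE_eq_esymm, hf]
  have htop := newton_top (Multiset.card w) f (by omega)
  rw [hconv, hconv, hconv, hw] at htop
  rw [show r + 2 - 1 = r + 1 by omega, show r + 2 - 2 = r by omega] at htop
  convert htop using 4 <;> omega


lemma newton_ms (s : Multiset ℝ) (r : ℕ) (h : r + 2 ≤ Multiset.card s) :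
    ((Multiset.card s).choose (r+1) : ℝ)^2 * (s.esymm r * s.esymm (r+2))
      ≤ ((Multiset.card s).choose r : ℝ) * ((Multiset.card s).choose (r+2) : ℝ)
          * (s.esymm (r+1))^2 := by
  set d := Multiset.card s with hd
  set t := d - (r+2) with ht
  set P : Polynomial ℝ := (s.map (fun a => Polynomial.X + Polynomial.C a)).prod with hP
  have hPalt : P = ((s.map (fun a => -a)).map (fun a => Polynomial.X - Polynomial.C a)).prod := by
    rw [hP, Multiset.map_map]
    congr 1
    apply Multiset.map_congr rfl
    intro a _
    simp [sub_neg_eq_add]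
  have hProots : P.roots = s.map (fun a => -a) := by
    rw [hPalt]
    exact Polynomial.roots_multiset_prod_X_sub_C _
  have hPmonic : P.Monic := by
    rw [hPalt]
    exact Polynomial.monic_multiset_prod_of_monic _ _ (fun a _ => Polynomial.monic_X_sub_C a)
  have hPdeg : P.natDegree = d := by
    rw [hPalt, Polynomial.natDegree_multiset_prod_X_sub_C_eq_card, Multiset.card_map]
  have hProotcard : Multiset.card P.roots = d := by rw [hProots, Multiset.card_map]
  have iter : ∀ l, l ≤ d → (Polynomial.derivative^[l] P).natDegree = d - l ∧
      Multiset.card (Polynomial.derivative^[l] P).roots = d - l := by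
    intro l
    induction l with
    | zero => intro _; simpa using ⟨hPdeg, hProotcard⟩
    | succ l ih =>
      intro hl
      obtain ⟨h1, h2⟩ := ih (by omega)
      have hq0 : 0 < (Polynomial.derivative^[l] P).natDegree := by omega
      have hdeg' : (Polynomial.derivative (Polynomial.derivative^[l] P)).degree
          = ((d - (l+1) : ℕ) : WithBot ℕ) := by
        rw [Polynomial.degree_derivative_eq _ hq0, h1]
        congr 1
      have hnd : (Polynomial.derivative (Polynomial.derivative^[l] P)).natDegree = d - (l+1) :=
        Polynomial.natDegree_eq_of_degree_eq_some hdeg'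
      have hub := Polynomial.card_roots' (Polynomial.derivative (Polynomial.derivative^[l] P))
      have hlb := Polynomial.card_roots_le_derivative (Polynomial.derivative^[l] P)
      rw [Function.iterate_succ_apply']
      refine ⟨hnd, ?_⟩
      rw [hnd] at hub
      omega
  obtain ⟨hqdeg, hqroots⟩ := iter t (by omega)
  set q := Polynomial.derivative^[t] P with hq
  rw [show d - t = r + 2 by omega] at hqdeg hqroots
  have hsplits : Polynomial.Splits q := by
    rw [Polynomial.splits_iff_card_roots, hqroots, hqdeg]
  have hfact := hsplits.eq_prod_roots
  set w : Multiset ℝ := q.roots.map (fun a => -a) with hw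
  have hwcard : Multiset.card w = r + 2 := by rw [hw, Multiset.card_map, hqroots]
  have hmm : (Multiset.map (fun a => Polynomial.X - Polynomial.C a) q.roots).prod
      = (w.map (fun a => Polynomial.X + Polynomial.C a)).prod := by
    rw [hw, Multiset.map_map]
    apply congrArg
    apply Multiset.map_congr rfl
    intro a _
    simp [sub_eq_add_neg]
  have hfact2 : q = Polynomial.C q.leadingCoeff
      * (w.map (fun a => Polynomial.X + Polynomial.C a)).prod := by
    rw [← hmm]
    exact hfact
  have coeffq : ∀ i : ℕ, i ≤ r + 2 → q.coeff i
      = ((i + t).descFactorial t : ℝ) * s.esymm (r + 2 - i) := by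
    intro i hi
    rw [hq, Polynomial.coeff_iterate_derivative, nsmul_eq_mul]
    congr 1
    rw [hP, Multiset.prod_X_add_C_coeff s (by omega : i + t ≤ Multiset.card s)]
    congr 1
    omega
  have coeffw : ∀ i : ℕ, i ≤ r + 2 → q.coeff i = q.leadingCoeff * w.esymm (r + 2 - i) := by
    intro i hi
    conv_lhs => rw [hfact2]
    rw [Polynomial.coeff_C_mul, Multiset.prod_X_add_C_coeff w (by omega), hwcard]
  have hlc : q.leadingCoeff = ((r + 2 + t).descFactorial t : ℝ) := by
    have hc := coeffq (r+2) le_rfl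
    rw [Polynomial.leadingCoeff, hqdeg, hc, show r + 2 - (r+2) = 0 by omega, esymm_zero',
      mul_one]
  have key : ∀ j : ℕ, j ≤ r + 2 →
      (((r + 2 - j) + t).descFactorial t : ℝ) * s.esymm j
        = ((r + 2 + t).descFactorial t : ℝ) * w.esymm j := by
    intro j hj
    have h1 := coeffq (r + 2 - j) (by omega)
    have h2 := coeffw (r + 2 - j) (by omega)
    rw [show r + 2 - (r + 2 - j) = j by omega] at h1 h2
    rw [hlc] at h2
    rw [← h1, h2]
  have k0 := key r (by omega)
  have k1 := key (r+1) (by omega)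
  have k2 := key (r+2) le_rfl
  rw [show r + 2 - r = 2 by omega] at k0
  rw [show r + 2 - (r+1) = 1 by omega] at k1
  rw [show r + 2 - (r+2) = 0 by omega] at k2
  have top := newton_top_ms w r hwcard
  set A0 : ℝ := ((0 + t).descFactorial t : ℝ) with hA0
  set A1 : ℝ := ((1 + t).descFactorial t : ℝ) with hA1
  set A2 : ℝ := ((2 + t).descFactorial t : ℝ) with hA2
  set Ad : ℝ := ((r + 2 + t).descFactorial t : ℝ) with hAd
  -- D : inequality in terms of s-esymms with A-factors
  have D : ((r+2).choose (r+1) : ℝ)^2 * ((A2 * s.esymm r) * (A0 * s.esymm (r+2)))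
      ≤ ((r+2).choose r : ℝ) * ((r+2).choose (r+2) : ℝ) * (A1 * s.esymm (r+1))^2 := by
    rw [k0, k1, k2]
    nlinarith [mul_le_mul_of_nonneg_left top (sq_nonneg Ad)]
  -- explicit values of the A's
  have A0e : A0 = (t.factorial : ℝ) := by
    rw [hA0, Nat.zero_add, Nat.descFactorial_self]
  have A1e : A1 = ((t+1).factorial : ℝ) := by
    rw [hA1, Nat.descFactorial_eq_factorial_mul_choose]
    have hch : (1 + t).choose t = 1 + t := by
      rw [← Nat.choose_symm (by omega : t ≤ 1 + t), show 1 + t - t = 1 by omega,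
        Nat.choose_one_right]
    rw [hch, Nat.factorial_succ]
    push_cast
    ring
  have A2e : A2 * 2 = ((t+2).factorial : ℝ) := by
    rw [hA2, Nat.descFactorial_eq_factorial_mul_choose]
    have hch : (2 + t).choose t = (2 + t).choose 2 := by
      rw [← Nat.choose_symm (by omega : t ≤ 2 + t), show 2 + t - t = 2 by omega]
    rw [hch]
    push_cast [Nat.cast_choose_two, Nat.factorial_succ, Nat.factorial_succ]
    push_cast
    ring
  -- small binomials
  have s1 : ((r+2).choose (r+1) : ℝ) = (r : ℝ) + 2 := by
    have : (r+2).choose (r+1) = (r+2).choose 1 := by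
      rw [← Nat.choose_symm (by omega : r + 1 ≤ r + 2), show r + 2 - (r+1) = 1 by omega]
    rw [this, Nat.choose_one_right]
    push_cast; ring
  have s2 : ((r+2).choose r : ℝ) = ((r:ℝ)+2) * ((r:ℝ)+1) / 2 := by
    have : (r+2).choose r = (r+2).choose 2 := by
      rw [← Nat.choose_symm (by omega : r ≤ r + 2), show r + 2 - r = 2 by omega]
    rw [this, Nat.cast_choose_two]
    push_cast; ring
  have s3 : ((r+2).choose (r+2) : ℝ) = 1 := by
    rw [Nat.choose_self, Nat.cast_one]
  -- big binomials via factorials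
  have e1 : ((d.choose r : ℕ) : ℝ) * (r.factorial : ℝ) * ((t+2).factorial : ℝ)
      = (d.factorial : ℝ) := by
    have := Nat.choose_mul_factorial_mul_factorial (by omega : r ≤ d)
    rw [show d - r = t + 2 by omega] at this
    exact_mod_cast this
  have e2 : ((d.choose (r+1) : ℕ) : ℝ) * ((r+1).factorial : ℝ) * ((t+1).factorial : ℝ)
      = (d.factorial : ℝ) := by
    have := Nat.choose_mul_factorial_mul_factorial (by omega : r + 1 ≤ d)
    rw [show d - (r+1) = t + 1 by omega] at this
    exact_mod_cast this
  have e3 : ((d.choose (r+2) : ℕ) : ℝ) * ((r+2).factorial : ℝ) * (t.factorial : ℝ)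
      = (d.factorial : ℝ) := by
    have := Nat.choose_mul_factorial_mul_factorial (by omega : r + 2 ≤ d)
    rw [show d - (r+2) = t by omega] at this
    exact_mod_cast this
  -- the constant identity
  have const : ((d.choose r : ℕ) : ℝ) * ((d.choose (r+2) : ℕ) : ℝ)
        * (((r+2).choose (r+1) : ℝ)^2 * A2 * A0)
      = ((d.choose (r+1) : ℕ) : ℝ)^2
        * (((r+2).choose r : ℝ) * ((r+2).choose (r+2) : ℝ) * A1^2) := by
    have hfr : (0:ℝ) < (r.factorial : ℝ) := by exact_mod_cast Nat.factorial_pos r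
    have hfr1 : (0:ℝ) < ((r+1).factorial : ℝ) := by exact_mod_cast Nat.factorial_pos (r+1)
    have hfr2 : (0:ℝ) < ((r+2).factorial : ℝ) := by exact_mod_cast Nat.factorial_pos (r+2)
    have hft : (0:ℝ) < (t.factorial : ℝ) := by exact_mod_cast Nat.factorial_pos t
    have hft1 : (0:ℝ) < ((t+1).factorial : ℝ) := by exact_mod_cast Nat.factorial_pos (t+1)
    have hft2 : (0:ℝ) < ((t+2).factorial : ℝ) := by exact_mod_cast Nat.factorial_pos (t+2)
    have E1 : ((d.choose r : ℕ) : ℝ)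
        = (d.factorial : ℝ) / ((r.factorial : ℝ) * ((t+2).factorial : ℝ)) := by
      field_simp
      linarith [e1]
    have E2 : ((d.choose (r+1) : ℕ) : ℝ)
        = (d.factorial : ℝ) / (((r+1).factorial : ℝ) * ((t+1).factorial : ℝ)) := by
      field_simp
      linarith [e2]
    have E3 : ((d.choose (r+2) : ℕ) : ℝ)
        = (d.factorial : ℝ) / (((r+2).factorial : ℝ) * (t.factorial : ℝ)) := by
      field_simp
      linarith [e3]
    have A2e' : A2 = ((t+2).factorial : ℝ) / 2 := by linarith [A2e]
    have fr1 : ((r+1).factorial : ℝ) = ((r:ℝ)+1) * (r.factorial : ℝ) := by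
      rw [Nat.factorial_succ]; push_cast; ring
    have fr2 : ((r+2).factorial : ℝ) = ((r:ℝ)+2) * ((r+1).factorial : ℝ) := by
      rw [show r + 2 = (r+1) + 1 by omega, Nat.factorial_succ]; push_cast; ring
    rw [E1, E2, E3, s1, s2, s3, A0e, A1e, A2e', fr2, fr1]
    field_simp
  -- conclude
  have cpos : (0:ℝ) < ((r+2).choose (r+1) : ℝ)^2 * A2 * A0 := by
    have h1 : 0 < (r+2).choose (r+1) := Nat.choose_pos (by omega)
    have h2 : 0 < (2+t).descFactorial t := Nat.pos_of_ne_zero (by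
      rw [Ne, Nat.descFactorial_eq_zero_iff_lt]; omega)
    have h3 : 0 < (0+t).descFactorial t := Nat.pos_of_ne_zero (by
      rw [Ne, Nat.descFactorial_eq_zero_iff_lt]; omega)
    have c1 : (0:ℝ) < ((r+2).choose (r+1) : ℝ) := by exact_mod_cast h1
    have c2 : (0:ℝ) < A2 := by rw [hA2]; exact_mod_cast h2
    have c3 : (0:ℝ) < A0 := by rw [hA0]; exact_mod_cast h3
    positivity
  have final := mul_le_mul_of_nonneg_left D (by positivity : (0:ℝ) ≤ ((d.choose (r+1) : ℕ) : ℝ)^2)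
  refine le_of_mul_le_mul_right ?_ cpos
  calc ((d.choose (r+1) : ℕ) : ℝ)^2 * (s.esymm r * s.esymm (r+2))
        * (((r+2).choose (r+1) : ℝ)^2 * A2 * A0)
      = ((d.choose (r+1) : ℕ) : ℝ)^2
        * (((r+2).choose (r+1) : ℝ)^2 * ((A2 * s.esymm r) * (A0 * s.esymm (r+2)))) := by ring
    _ ≤ ((d.choose (r+1) : ℕ) : ℝ)^2
        * (((r+2).choose r : ℝ) * ((r+2).choose (r+2) : ℝ) * (A1 * s.esymm (r+1))^2) := final
    _ = ((d.choose r : ℕ) : ℝ) * ((d.choose (r+2) : ℕ) : ℝ) * (s.esymm (r+1))^2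
        * (((r+2).choose (r+1) : ℝ)^2 * A2 * A0) := by
      linear_combination (-(s.esymm (r+1))^2) * const

lemma choose_cast_pos (a b : ℕ) (h : b ≤ a) : (0:ℝ) < (a.choose b : ℝ) := by
  exact_mod_cast Nat.choose_pos h

lemma card_univ_map (n : ℕ) (x : Fin n → ℝ) :
    Multiset.card (Finset.univ.val.map x) = n := by
  rw [Multiset.card_map]
  exact Finset.card_univ.trans (Fintype.card_fin n)

lemma newton_H (n : ℕ) (x : Fin n → ℝ) (r : ℕ) (h : r + 2 ≤ n) :
    Hnorm n r x * Hnorm n (r+2) x ≤ (Hnorm n (r+1) x)^2 := by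
  have hm := newton_ms (Finset.univ.val.map x) r (by rw [card_univ_map]; omega)
  rw [card_univ_map, ← sigmaE_eq_esymm, ← sigmaE_eq_esymm, ← sigmaE_eq_esymm] at hm
  rw [Hnorm, Hnorm, Hnorm, div_mul_div_comm, div_pow,
    div_le_div_iff₀ (by exact mul_pos (choose_cast_pos n r (by omega)) (choose_cast_pos n (r+2) (by omega)))
      (by exact pow_pos (choose_cast_pos n (r+1) (by omega)) 2)]
  nlinarith [hm]

lemma newton_HDel (n : ℕ) (p : Fin n) (x : Fin n → ℝ) (r : ℕ) (h : r + 2 ≤ n - 1) :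
    HnormDel n r p x * HnormDel n (r+2) p x ≤ (HnormDel n (r+1) p x)^2 := by
  have hm := newton_ms ((Finset.univ.erase p).val.map x) r (by rw [card_del]; omega)
  rw [card_del, ← sigmaDel_eq_esymm, ← sigmaDel_eq_esymm, ← sigmaDel_eq_esymm] at hm
  rw [HnormDel, HnormDel, HnormDel, div_mul_div_comm, div_pow,
    div_le_div_iff₀ (by exact mul_pos (choose_cast_pos (n-1) r (by omega)) (choose_cast_pos (n-1) (r+2) (by omega)))
      (by exact pow_pos (choose_cast_pos (n-1) (r+1) (by omega)) 2)]
  nlinarith [hm]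

lemma nat_id1 (n m : ℕ) : n * (n-1).choose (m+1) = (n - (m+1)) * n.choose (m+1) := by
  cases n with
  | zero => simp
  | succ N =>
    simp only [Nat.add_sub_cancel]
    calc (N+1) * N.choose (m+1) = (N+1).choose (m+2) * (m+2) := Nat.add_one_mul_choose_eq N (m+1)
      _ = (N+1).choose (m+1) * (N+1 - (m+1)) := Nat.choose_succ_right_eq (N+1) (m+1)
      _ = (N+1 - (m+1)) * (N+1).choose (m+1) := Nat.mul_comm _ _

lemma nat_id2 (n m : ℕ) : n * (n-1).choose m = (m + 1) * n.choose (m+1) := by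
  cases n with
  | zero => simp
  | succ N =>
    simp only [Nat.add_sub_cancel]
    calc (N+1) * N.choose m = (N+1).choose (m+1) * (m+1) := Nat.add_one_mul_choose_eq N m
      _ = (m+1) * (N+1).choose (m+1) := Nat.mul_comm _ _

lemma HD (n m : ℕ) (p : Fin n) (x : Fin n → ℝ) (hm : 1 ≤ m) (hmn : m ≤ n) :
    (n:ℝ) * Hnorm n m x
      = ((n:ℝ) - m) * HnormDel n m p x + m * x p * HnormDel n (m-1) p x := by
  obtain ⟨m', rfl⟩ : ∃ m', m = m' + 1 := ⟨m-1, by omega⟩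
  have hrec := sigma_del_rec n m' p x
  have hCpos : (0:ℝ) < (n.choose (m'+1) : ℝ) := choose_cast_pos n (m'+1) hmn
  have hD0pos : (0:ℝ) < ((n-1).choose m' : ℝ) := choose_cast_pos (n-1) m' (by omega)
  have id2 : (n:ℝ) * ((n-1).choose m' : ℝ) = ((m':ℝ) + 1) * (n.choose (m'+1) : ℝ) := by
    exact_mod_cast nat_id2 n m'
  rcases Nat.lt_or_ge (m'+1) n with hlt | hge
  · have hD1pos : (0:ℝ) < ((n-1).choose (m'+1) : ℝ) := choose_cast_pos (n-1) (m'+1) (by omega)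
    have id1 : (n:ℝ) * ((n-1).choose (m'+1) : ℝ)
        = ((n:ℝ) - ((m':ℝ)+1)) * (n.choose (m'+1) : ℝ) := by
      have h := nat_id1 n m'
      have hc : ((n - (m'+1) : ℕ) : ℝ) = (n:ℝ) - ((m':ℝ) + 1) := by
        push_cast [Nat.cast_sub hmn]; ring
      calc (n:ℝ) * ((n-1).choose (m'+1) : ℝ)
          = ((n * (n-1).choose (m'+1) : ℕ) : ℝ) := by push_cast; ring
        _ = (((n - (m'+1)) * n.choose (m'+1) : ℕ) : ℝ) := by rw [h]
        _ = ((n:ℝ) - ((m':ℝ)+1)) * (n.choose (m'+1) : ℝ) := by rw [Nat.cast_mul, hc]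
    rw [Hnorm, HnormDel, HnormDel, hrec, Nat.add_sub_cancel]
    push_cast
    field_simp
    linear_combination (sigmaDel n (m'+1) p x * (((n-1).choose m' : ℕ) : ℝ)) * id1
      + (x p * sigmaDel n m' p x * (((n-1).choose (m'+1) : ℕ) : ℝ)) * id2
  · have hn : m' + 1 = n := by omega
    have hdel0 : sigmaDel n (m'+1) p x = 0 := sigmaDel_high n (m'+1) p x (by omega)
    have hC1 : (n.choose (m'+1) : ℝ) = 1 := by rw [hn, Nat.choose_self, Nat.cast_one]
    have hD01 : (((n-1).choose m' : ℕ) : ℝ) = 1 := by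
      rw [show m' = n - 1 by omega, Nat.choose_self, Nat.cast_one]
    have hmr : (m' : ℝ) + 1 = (n : ℝ) := by exact_mod_cast congrArg (Nat.cast (R := ℝ)) hn
    rw [Hnorm, HnormDel, HnormDel, hrec, Nat.add_sub_cancel, hdel0, hC1, hD01]
    push_cast
    rw [hmr]
    ring

lemma Hnorm_pos (n m : ℕ) (x : Fin n → ℝ) (h : 0 < sigmaE n m x) (hmn : m ≤ n) :
    0 < Hnorm n m x := div_pos h (choose_cast_pos n m hmn)

lemma del_pos (n : ℕ) (x : Fin n → ℝ) (p : Fin n) :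
    ∀ k, k ≤ n → (∀ i, 1 ≤ i → i ≤ k → 0 < sigmaE n i x) →
      ∀ m, m + 1 ≤ k → 0 < sigmaDel n m p x := by
  intro k
  induction k with
  | zero => intro _ _ m hm; omega
  | succ k ih =>
    intro hk hx m hm
    rcases Nat.lt_or_ge (m+1) (k+1) with hlt | _
    · exact ih (by omega) (fun i h1 h2 => hx i h1 (by omega)) m (by omega)
    · have hmk : m = k := by omega
      subst hmk
      rcases Nat.eq_zero_or_pos m with rfl | hm1
      · rw [sigmaDel_zero]; norm_num
      by_contra hneg
      push_neg at hneg
      have hprev : 0 < sigmaDel n (m-1) p x :=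
        ih (by omega) (fun i h1 h2 => hx i h1 (by omega)) (m-1) (by omega)
      have hD0 : (0:ℝ) < ((n-1).choose (m-1) : ℝ) := choose_cast_pos _ _ (by omega)
      have hD1 : (0:ℝ) < ((n-1).choose m : ℝ) := choose_cast_pos _ _ (by omega)
      have hb2pos : 0 < HnormDel n (m-1) p x := div_pos hprev hD0
      have hb1neg : HnormDel n m p x ≤ 0 := by
        rw [HnormDel]
        exact div_nonpos_iff.mpr (Or.inr ⟨hneg, hD1.le⟩)
      have hH1 := Hnorm_pos n m x (hx m (by omega) (by omega)) (by omega)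
      have hH2 := Hnorm_pos n (m+1) x (hx (m+1) (by omega) (by omega)) (by omega)
      have hd1 := HD n m p x (by omega) (by omega)
      have hd2 := HD n (m+1) p x (by omega) (by omega)
      rw [Nat.add_sub_cancel] at hd2
      push_cast at hd1 hd2
      have hcast : (m:ℝ) + 1 ≤ (n:ℝ) := by exact_mod_cast hk
      have hmr : (1:ℝ) ≤ (m:ℝ) := by exact_mod_cast hm1
      -- x p > 0
      have hstep : 0 < (m:ℝ) * x p * HnormDel n (m-1) p x := by
        nlinarith [hd1, hH1,
          mul_nonneg (by linarith : (0:ℝ) ≤ (n:ℝ) - (m:ℝ))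
            (neg_nonneg.mpr hb1neg)]
      have hxp : 0 < x p := by
        by_contra hc
        push_neg at hc
        nlinarith [hstep, mul_nonneg (neg_nonneg.mpr hc)
          (mul_pos (by linarith : (0:ℝ) < (m:ℝ)) hb2pos).le]
      rcases Nat.lt_or_ge (m+1) n with hlt2 | hge2
      · -- m + 2 ≤ n
        have hD2 : (0:ℝ) < ((n-1).choose (m+1) : ℝ) := choose_cast_pos _ _ (by omega)
        have hb0pos : 0 < HnormDel n (m+1) p x := by
          by_contra hc
          push_neg at hc
          nlinarith [hd2, hH2,
            mul_nonneg (mul_pos (by linarith : (0:ℝ) < (m:ℝ)+1) hxp).le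
              (neg_nonneg.mpr hb1neg),
            mul_nonneg (by linarith : (0:ℝ) ≤ (n:ℝ) - ((m:ℝ)+1)) (neg_nonneg.mpr hc)]
        have NT := newton_HDel n p x (m-1) (by omega)
        rw [show m-1+1 = m by omega, show m-1+2 = m+1 by omega] at NT
        have u1 : ((n:ℝ) - (m:ℝ)) * (-(HnormDel n m p x))
            < (m:ℝ) * x p * HnormDel n (m-1) p x := by
          nlinarith [hd1, hH1]
        have u2 : ((m:ℝ)+1) * x p * (-(HnormDel n m p x))
            < ((n:ℝ) - (m:ℝ) - 1) * HnormDel n (m+1) p x := by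
          nlinarith [hd2, hH2]
        have nn1 : (0:ℝ) ≤ ((n:ℝ) - (m:ℝ)) * (-(HnormDel n m p x)) :=
          mul_nonneg (by linarith) (by linarith)
        have nn2 : (0:ℝ) ≤ ((m:ℝ)+1) * x p * (-(HnormDel n m p x)) :=
          mul_nonneg (mul_nonneg (by linarith) hxp.le) (by linarith)
        have prod := mul_lt_mul'' u1 u2 nn1 nn2
        nlinarith [prod, hxp, sq_nonneg (HnormDel n m p x),
          mul_le_mul_of_nonneg_left NT
            (mul_nonneg (mul_nonneg (by linarith : (0:ℝ) ≤ (m:ℝ))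
              (by nlinarith [(by exact_mod_cast (show (m:ℕ)+2 ≤ n by omega) : (m:ℝ)+2 ≤ (n:ℝ))] :
                (0:ℝ) ≤ (n:ℝ)-(m:ℝ)-1)) hxp.le),
          mul_nonneg (mul_nonneg hxp.le (sq_nonneg (HnormDel n m p x)))
            (Nat.cast_nonneg (α := ℝ) n)]
      · -- m + 1 = n
        have hcast2 : (n:ℝ) = (m:ℝ) + 1 := by
          have : n = m + 1 := by omega
          exact_mod_cast this
        have hzero : ((n:ℝ) - ((m:ℝ)+1)) * HnormDel n (m+1) p x = 0 := by
          rw [hcast2]; ring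
        nlinarith [hd2, hH2, hzero,
          mul_nonneg (mul_pos (by linarith : (0:ℝ) < (m:ℝ)+1) hxp).le
            (neg_nonneg.mpr hb1neg)]

lemma Plem (n k : ℕ) (x : Fin n → ℝ) (p : Fin n) (hk : k ≤ n)
    (hx : ∀ i, 1 ≤ i → i ≤ k → 0 < sigmaE n i x) (m : ℕ) (hm : 1 ≤ m) (hmk : m + 1 ≤ k) :
    ((m:ℝ) - 1) * Hnorm n (m+1) x * HnormDel n (m-2) p x
      < (m:ℝ) * HnormDel n (m-1) p x * Hnorm n m x := by
  have hH1 := Hnorm_pos n m x (hx m hm (by omega)) (by omega)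
  have hH2 := Hnorm_pos n (m+1) x (hx (m+1) (by omega) hmk) (by omega)
  have hbm1 : 0 < HnormDel n (m-1) p x :=
    div_pos (del_pos n x p k hk hx (m-1) (by omega)) (choose_cast_pos _ _ (by omega))
  rcases Nat.lt_or_ge m 2 with hm2 | hm2
  · have hm1 : m = 1 := by omega
    subst hm1
    have hb0 := hbm1
    norm_num at hb0 ⊢
    nlinarith [mul_pos hb0 hH1]
  · have hbm2 : 0 < HnormDel n (m-2) p x :=
      div_pos (del_pos n x p k hk hx (m-2) (by omega)) (choose_cast_pos _ _ (by omega))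
    have hbm : 0 < HnormDel n m p x :=
      div_pos (del_pos n x p k hk hx m (by omega)) (choose_cast_pos _ _ (by omega))
    have hHm1 := Hnorm_pos n (m-1) x (hx (m-1) (by omega) (by omega)) (by omega)
    have hd1 := HD n (m-1) p x (by omega) (by omega)
    have hd2 := HD n m p x (by omega) (by omega)
    rw [show m - 1 - 1 = m - 2 by omega] at hd1
    have hc1 : ((m-1 : ℕ) : ℝ) = (m:ℝ) - 1 := by
      rw [Nat.cast_sub hm]; norm_num
    rw [hc1] at hd1
    push_cast at hd1 hd2
    have NT := newton_HDel n p x (m-2) (by omega)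
    rw [show m-2+1 = m-1 by omega, show m-2+2 = m by omega] at NT
    have NTH := newton_H n x (m-1) (by omega)
    rw [show m-1+1 = m by omega, show m-1+2 = m+1 by omega] at NTH
    have hcast : (m:ℝ) + 1 ≤ (n:ℝ) := by
      have : m + 1 ≤ n := by omega
      exact_mod_cast this
    have hnpos : (0:ℝ) < (n:ℝ) := by
      have : 0 < n := by omega
      exact_mod_cast this
    have key : (n:ℝ) * ((m:ℝ) * HnormDel n (m-1) p x * Hnorm n (m-1) x
        - ((m:ℝ)-1) * HnormDel n (m-2) p x * Hnorm n m x)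
        = (m:ℝ)*((n:ℝ)-(m:ℝ)+1) * (HnormDel n (m-1) p x)^2
          - ((m:ℝ)-1)*((n:ℝ)-(m:ℝ)) * (HnormDel n (m-2) p x * HnormDel n m p x) := by
      linear_combination ((m:ℝ) * HnormDel n (m-1) p x) * hd1
        - (((m:ℝ)-1) * HnormDel n (m-2) p x) * hd2
    have Q : ((m:ℝ)-1) * HnormDel n (m-2) p x * Hnorm n m x
        < (m:ℝ) * HnormDel n (m-1) p x * Hnorm n (m-1) x := by
      nlinarith [key, mul_pos hbm2 hbm,
        mul_le_mul_of_nonneg_left NT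
          (by nlinarith : (0:ℝ) ≤ (m:ℝ) * ((n:ℝ)-(m:ℝ)+1)),
        hnpos]
    nlinarith [mul_le_mul_of_nonneg_left NTH
        (mul_nonneg (by linarith : (0:ℝ) ≤ (m:ℝ)-1) hbm2.le),
      mul_lt_mul_of_pos_right Q hH1, hHm1, hH2]

end Stmt7Aux

/-- For `κ - ε ∈ Γ_k⁺`, `1 ≤ i < j ≤ k`, `j ≥ 2` and `1 ≤ p ≤ n`,
`(j-1) H_{j-2;p}(κ-ε) H_i(κ-ε) > (i-1) H_j(κ-ε) H_{i-2;p}(κ-ε)`.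
(By convention `H_{-1;p} = 0`; for `i = 1` the coefficient `i-1 = 0` makes the
right-hand side vanish.) -/

theorem stmt7 (n k i j : ℕ) (hi : 1 ≤ i) (hij : i < j) (hjk : j ≤ k) (hkn : k ≤ n)
    (hj2 : 2 ≤ j) (ε : ℝ) (κ : Fin n → ℝ) (p : Fin n)
    (hx : (fun q => κ q - ε) ∈ GardingCone n k) :
    ((j - 1 : ℕ) : ℝ) * HnormDel n (j-2) p (fun q => κ q - ε) * Hnorm n i (fun q => κ q - ε)
      > ((i - 1 : ℕ) : ℝ) * Hnorm n j (fun q => κ q - ε) *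
          HnormDel n (i-2) p (fun q => κ q - ε) := by
  set x : Fin n → ℝ := fun q => κ q - ε with hxx
  have hx' : ∀ i', 1 ≤ i' → i' ≤ k → 0 < sigmaE n i' x := hx
  have main : ∀ J, i + 1 ≤ J → J ≤ k →
      ((J - 1 : ℕ) : ℝ) * HnormDel n (J-2) p x * Hnorm n i x
        > ((i - 1 : ℕ) : ℝ) * Hnorm n J x * HnormDel n (i-2) p x := by
    intro J hJ
    induction J, hJ using Nat.le_induction with
    | base =>
      intro hik
      have P := Stmt7Aux.Plem n k x p hkn hx' i hi (by omega)
      have c2 : ((i - 1 : ℕ) : ℝ) = (i:ℝ) - 1 := by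
        rw [Nat.cast_sub hi]; norm_num
      rw [show i + 1 - 2 = i - 1 by omega, show i + 1 - 1 = i from by omega, c2]
      exact P
    | succ J hJi ih =>
      intro hJk
      have S := ih (by omega)
      have P := Stmt7Aux.Plem n k x p hkn hx' J (by omega) (by omega)
      have hHi := Stmt7Aux.Hnorm_pos n i x (hx' i hi (by omega)) (by omega)
      have hHJ := Stmt7Aux.Hnorm_pos n J x (hx' J (by omega) (by omega)) (by omega)
      have hHJ1 := Stmt7Aux.Hnorm_pos n (J+1) x (hx' (J+1) (by omega) hJk) (by omega)
      have hbi2 : 0 < HnormDel n (i-2) p x :=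
        div_pos (Stmt7Aux.del_pos n x p k hkn hx' (i-2) (by omega))
          (Stmt7Aux.choose_cast_pos (n-1) (i-2) (by omega))
      have hbJ1 : 0 < HnormDel n (J-1) p x :=
        div_pos (Stmt7Aux.del_pos n x p k hkn hx' (J-1) (by omega))
          (Stmt7Aux.choose_cast_pos (n-1) (J-1) (by omega))
      have ci : (0:ℝ) ≤ ((i-1:ℕ):ℝ) := Nat.cast_nonneg _
      rw [show J + 1 - 1 = J from by omega, show J + 1 - 2 = J - 1 by omega]
      have cJ : ((J - 1 : ℕ) : ℝ) = (J:ℝ) - 1 := by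
        rw [Nat.cast_sub (by omega)]; norm_num
      rw [cJ] at S
      have c1 := mul_lt_mul_of_pos_right S hHJ1
      have c2 := mul_lt_mul_of_pos_right P hHi
      nlinarith [c1, c2, hHJ]
  exact main j (by omega) hjk
end

section
/- (Rigidity of full Newton–Maclaurin chain) Let λ ∈ Γ_k^+ ⊂ ℝ^n and suppose that for some 1 ≤ l < k ≤ n equality holds: H_{k-1}(λ) H_l(λ) = H_k(λ) H_{l-1}(λ). Then λ_1 = λ_2 = ⋯ = λ_n. -/
open Finset Polynomial

section Auxiliary

lemma esymm_cons (a : ℝ) (u : Multiset ℝ) (k : ℕ) :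
    Multiset.esymm (a ::ₘ u) (k+1) = Multiset.esymm u (k+1) + a * Multiset.esymm u k := by
  simp [Multiset.esymm, Multiset.powersetCard_cons, Multiset.map_map, Function.comp,
    Multiset.sum_map_mul_left]

lemma esymm_one_ms (u : Multiset ℝ) : Multiset.esymm u 1 = u.sum := by
  simp [Multiset.esymm, Multiset.powersetCard_one]

lemma esymm_two (u : Multiset ℝ) : u.sum ^ 2 = (u.map (·^2)).sum + 2 * u.esymm 2 := by
  induction u using Multiset.induction with
  | empty => simp [Multiset.esymm, Multiset.powersetCard_eq_empty 2 (s := (0 : Multiset ℝ)) (by simp)]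
  | cons a u ih =>
      rw [Multiset.sum_cons, esymm_cons, esymm_one_ms]
      simp only [Multiset.map_cons, Multiset.sum_cons]
      ring_nf
      ring_nf at ih
      linarith [ih]

lemma sigmaE_zero (n : ℕ) (x : Fin n → ℝ) : sigmaE n 0 x = 1 := by
  simp [sigmaE]

lemma sigmaE_one (n : ℕ) (x : Fin n → ℝ) : sigmaE n 1 x = ∑ i, x i := by
  simp [sigmaE, Finset.powersetCard_one, Finset.sum_map]

lemma sigmaE_self (n : ℕ) (x : Fin n → ℝ) : sigmaE n n x = ∏ i, x i := by
  have h : Finset.powersetCard n (Finset.univ : Finset (Fin n)) = {Finset.univ} := by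
    have := Finset.powersetCard_self (Finset.univ : Finset (Fin n))
    simpa using this
  rw [sigmaE, h]
  simp

lemma sigmaE_compl (n k : ℕ) (hk : k ≤ n) (x : Fin n → ℝ) :
    sigmaE n (n - k) x = ∑ t ∈ Finset.powersetCard k (Finset.univ : Finset (Fin n)),
      ∏ i ∈ tᶜ, x i := by
  rw [sigmaE]
  refine Finset.sum_nbij' (fun t => tᶜ) (fun t => tᶜ) ?_ ?_ ?_ ?_ ?_
  · intro t ht
    simp only [Finset.mem_powersetCard_univ] at ht ⊢
    rw [Finset.card_compl, ht, Fintype.card_fin]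
    omega
  · intro t ht
    simp only [Finset.mem_powersetCard_univ] at ht ⊢
    rw [Finset.card_compl, ht, Fintype.card_fin]
  · intro t _; exact compl_compl t
  · intro t _; exact compl_compl t
  · intro t _; rw [compl_compl]

lemma variance_ineq (n : ℕ) (x : Fin n → ℝ) :
    (∑ i, x i)^2 ≤ n * ∑ i, (x i)^2 ∧
    ((∑ i, x i)^2 = n * ∑ i, (x i)^2 → ∀ i j, x i = x j) := by
  have key : ∑ i, ∑ j, (x i - x j)^2 = 2 * (n * ∑ i, (x i)^2) - 2 * (∑ i, x i)^2 := by
    have h1 : ∀ i, ∑ j, (x i - x j)^2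
        = n * (x i)^2 - 2 * x i * (∑ j, x j) + ∑ j, (x j)^2 := by
      intro i
      simp only [sub_sq, Finset.sum_add_distrib, Finset.sum_sub_distrib, ← Finset.mul_sum,
        Finset.sum_const, Finset.card_univ, Fintype.card_fin, nsmul_eq_mul, mul_assoc]
    rw [Finset.sum_congr rfl (fun i _ => h1 i)]
    simp only [Finset.sum_add_distrib, Finset.sum_sub_distrib, ← Finset.mul_sum,
      ← Finset.sum_mul, Finset.sum_const, Finset.card_univ, Fintype.card_fin, nsmul_eq_mul]
    ring
  constructor
  · nlinarith [Finset.sum_nonneg (fun i (_ : i ∈ Finset.univ) =>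
      Finset.sum_nonneg (fun j (_ : j ∈ Finset.univ) => sq_nonneg (x i - x j)))]
  · intro h i j
    have h0 : ∑ i, ∑ j, (x i - x j)^2 = 0 := by rw [key]; linarith
    have := (Finset.sum_eq_zero_iff_of_nonneg (fun i _ => Finset.sum_nonneg
      (fun j _ => sq_nonneg (x i - x j)))).1 h0 i (Finset.mem_univ i)
    have := (Finset.sum_eq_zero_iff_of_nonneg (fun j _ => sq_nonneg (x i - x j))).1 this j
      (Finset.mem_univ j)
    have := pow_eq_zero_iff (n := 2) (by norm_num) |>.1 this
    linarith

lemma sigmaE_two_eq (n : ℕ) (y : Fin n → ℝ) :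
    (∑ i, y i)^2 = (∑ i, (y i)^2) + 2 * sigmaE n 2 y := by
  have h := esymm_two ((Finset.univ : Finset (Fin n)).val.map y)
  rw [Finset.esymm_map_val, Multiset.map_map] at h
  exact h

lemma newton_base (n : ℕ) (hn : 2 ≤ n) (x : Fin n → ℝ) :
    2 * n * (sigmaE n (n-2) x * sigmaE n n x) ≤ (n-1) * (sigmaE n (n-1) x)^2 ∧
    (2 * n * (sigmaE n (n-2) x * sigmaE n n x) = (n-1) * (sigmaE n (n-1) x)^2 →
      sigmaE n (n-1) x ≠ 0 → ∀ i j, x i = x j) := by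
  by_cases hz : ∃ m, x m = 0
  · obtain ⟨m, hm⟩ := hz
    have hE : sigmaE n n x = 0 := by
      rw [sigmaE_self]; exact Finset.prod_eq_zero (Finset.mem_univ m) hm
    have hn1 : (0:ℝ) < (n:ℝ) - 1 := by
      have : (2:ℝ) ≤ n := by exact_mod_cast hn
      linarith
    constructor
    · rw [hE]; nlinarith [sq_nonneg (sigmaE n (n-1) x)]
    · intro heq hne
      exfalso
      rw [hE] at heq
      have : (sigmaE n (n-1) x)^2 = 0 := by
        have := heq.symm
        nlinarith
      exact hne (by nlinarith [sq_nonneg (sigmaE n (n-1) x)])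
  · push_neg at hz
    set y : Fin n → ℝ := fun i => (x i)⁻¹ with hy
    have hEne : (∏ i, x i) ≠ 0 := Finset.prod_ne_zero_iff.2 fun i _ => hz i
    have hfac : ∀ k, k ≤ n → sigmaE n (n-k) x = (∏ i, x i) * sigmaE n k y := by
      intro k hk
      rw [sigmaE_compl n k hk, sigmaE, Finset.mul_sum]
      refine Finset.sum_congr rfl fun t ht => ?_
      have htx : (∏ i ∈ t, x i) ≠ 0 := Finset.prod_ne_zero_iff.2 fun i _ => hz i
      have h1 : (∏ i ∈ t, x i) * ∏ i ∈ tᶜ, x i = ∏ i, x i := Finset.prod_mul_prod_compl t x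
      have h2 : ∏ i ∈ t, y i = (∏ i ∈ t, x i)⁻¹ := by
        rw [hy, ← Finset.prod_inv_distrib]
      rw [h2]
      field_simp
      linarith [h1]
    have hE1 : sigmaE n (n-1) x = (∏ i, x i) * ∑ i, y i := by
      rw [hfac 1 (by omega), sigmaE_one]
    have hE2 : sigmaE n (n-2) x = (∏ i, x i) * sigmaE n 2 y := hfac 2 hn
    have hEn : sigmaE n n x = ∏ i, x i := sigmaE_self n x
    have hid : (∑ i, y i)^2 = (∑ i, (y i)^2) + 2 * sigmaE n 2 y := sigmaE_two_eq n y
    have hvar := variance_ineq n y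
    have hEsq : (0:ℝ) < (∏ i, x i)^2 := by positivity
    have h3 : (n:ℝ) * ((∑ i, y i)^2) = n * ((∑ i, (y i)^2) + 2 * sigmaE n 2 y) := by
      rw [hid]
    have hcore : 2*(n:ℝ)*sigmaE n 2 y ≤ ((n:ℝ)-1)*(∑ i, y i)^2 := by linarith [hvar.1]
    constructor
    · rw [hE1, hE2, hEn]
      linarith [mul_le_mul_of_nonneg_left hcore hEsq.le]
    · rw [hE1, hE2, hEn]
      intro heq hne
      have e1 : (∏ i, x i)^2 * (2*(n:ℝ)*sigmaE n 2 y)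
          = (∏ i, x i)^2 * (((n:ℝ)-1)*(∑ i, y i)^2) := by
        linear_combination heq
      have h4 := mul_left_cancel₀ (pow_ne_zero 2 hEne) e1
      have : (∑ i, y i)^2 = n * ∑ i, (y i)^2 := by linarith [hvar.1]
      intro i j
      have hy' := hvar.2 this i j
      have : (y i)⁻¹ = (y j)⁻¹ := by rw [hy']
      rwa [hy, inv_inv, inv_inv] at this

lemma deriv_roots_esymm (n : ℕ) (hn : 1 ≤ n) (s : Multiset ℝ) (hcard : Multiset.card s = n) :
    ∃ t : Multiset ℝ, Multiset.card t = n - 1 ∧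
      ∀ m, m ≤ n - 1 → (n : ℝ) * t.esymm m = ((n : ℝ) - m) * s.esymm m := by
  classical
  set f : Polynomial ℝ := (s.map fun a => X - C a).prod with hf
  have hmonic : f.Monic := monic_multiset_prod_of_monic _ _ fun a _ => monic_X_sub_C a
  have hdeg : f.natDegree = n := by
    rw [hf, natDegree_multiset_prod_X_sub_C_eq_card, hcard]
  have hroots : f.roots = s := roots_multiset_prod_X_sub_C s
  set g := derivative f with hg
  have hgle : g.natDegree ≤ n - 1 := by
    have := natDegree_derivative_le f; rw [hdeg] at this; exact this
  have hcard1 : Multiset.card f.roots ≤ Multiset.card g.roots + 1 := card_roots_le_derivative f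
  rw [hroots, hcard] at hcard1
  have hcards : Multiset.card g.roots = n - 1 := by
    have h2 : Multiset.card g.roots ≤ g.natDegree := card_roots' g
    omega
  have hgdeg : g.natDegree = n - 1 := by
    have h2 : Multiset.card g.roots ≤ g.natDegree := card_roots' g
    omega
  have hcoefff : ∀ m : ℕ, m ≤ n → f.coeff (n - m) = (-1)^m * s.esymm m := by
    intro m hm
    have h := Multiset.prod_X_sub_C_coeff s (k := n - m) (by rw [hcard]; omega)
    rw [← hf, hcard] at h
    rw [h, show n - (n - m) = m by omega]
  have hlead : g.leadingCoeff = n := by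
    rw [Polynomial.leadingCoeff, hgdeg, hg, coeff_derivative,
      show (n - 1) + 1 = n by omega, ← hdeg, hmonic.coeff_natDegree, hdeg]
    rw [one_mul]
    norm_cast
    omega
  refine ⟨g.roots, hcards, fun m hm => ?_⟩
  have hc1 : g.coeff (n - 1 - m) =
      g.leadingCoeff * (-1)^m * g.roots.esymm m := by
    have h := Polynomial.coeff_eq_esymm_roots_of_card
      (by rw [hcards, hgdeg] : Multiset.card g.roots = g.natDegree)
      (k := n - 1 - m) (by omega)
    rw [h, hgdeg, show n - 1 - (n - 1 - m) = m by omega]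
  have hc2 : g.coeff (n - 1 - m) = f.coeff (n - m) * (n - m : ℕ) := by
    rw [hg, coeff_derivative, show (n - 1 - m) + 1 = n - m by omega]
    congr 1
    norm_cast
    omega
  rw [hcoefff m (by omega)] at hc2
  rw [hlead] at hc1
  have h3 : (n:ℝ) * (-1)^m * g.roots.esymm m = (-1)^m * s.esymm m * (n - m : ℕ) := by
    rw [← hc1, hc2]
  have hpm : ((-1:ℝ))^m ≠ 0 := by
    apply pow_ne_zero; norm_num
  rw [Nat.cast_sub (by omega : m ≤ n)] at h3
  have h4 : ((-1:ℝ)^m) * ((n:ℝ) * g.roots.esymm m)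
      = ((-1:ℝ)^m) * ((((n:ℝ) - m)) * s.esymm m) := by linear_combination h3
  exact mul_left_cancel₀ hpm h4

lemma multiset_exists_fn (s : Multiset ℝ) (n : ℕ) (h : Multiset.card s = n) :
    ∃ x : Fin n → ℝ, s = Finset.univ.val.map x := by
  have hlen : s.toList.length = n := by
    rw [← Multiset.coe_card, Multiset.coe_toList, h]
  refine ⟨fun i => s.toList.get (Fin.cast hlen.symm i), ?_⟩
  conv_lhs => rw [← Multiset.coe_toList s]
  rw [Fin.univ_val_map]
  congr 1
  refine (List.ext_get (by simp [hlen]) ?_).symm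
  intro i h1 h2
  simp [List.get_ofFn]

/-- normalized symmetric function of a multiset, with explicit ambient `n` -/
noncomputable def Hms (n : ℕ) (s : Multiset ℝ) (m : ℕ) : ℝ :=
  Multiset.esymm s m / (n.choose m)

lemma sigmaE_eq_esymm (n m : ℕ) (x : Fin n → ℝ) :
    sigmaE n m x = Multiset.esymm (Finset.univ.val.map x) m := by
  rw [Finset.esymm_map_val]; rfl

theorem newton_ms (n : ℕ) : ∀ (j : ℕ), 1 ≤ j → j + 1 ≤ n →
    ∀ s : Multiset ℝ, Multiset.card s = n →
    (Hms n s (j-1) * Hms n s (j+1) ≤ (Hms n s j)^2 ∧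
     (Hms n s (j-1) * Hms n s (j+1) = (Hms n s j)^2 →
       Hms n s j ≠ 0 → ∀ a ∈ s, ∀ b ∈ s, a = b)) := by
  induction n using Nat.strong_induction_on with
  | _ n IH =>
  intro j hj hjn s hcard
  obtain ⟨x, hx⟩ := multiset_exists_fn s n hcard
  have hES : ∀ m, Multiset.esymm s m = sigmaE n m x := by
    intro m; rw [hx, sigmaE_eq_esymm]
  rcases eq_or_lt_of_le hjn with hbase | hstep
  · -- base case : n = j + 1, i.e. j = n - 1
    have hn2 : 2 ≤ n := by omega
    have hb := newton_base n hn2 x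
    have hj1 : j - 1 = n - 2 := by omega
    have hj2 : j + 1 = n := by omega
    have hj0 : j = n - 1 := by omega
    rw [hj1, hj2, hj0]
    have hc1 : (n.choose n : ℝ) = 1 := by rw [Nat.choose_self]; norm_num
    have hc2 : (n.choose (n-1) : ℝ) = n := by
      rw [Nat.choose_symm (by omega : 1 ≤ n), Nat.choose_one_right]
    have hc3 : (n.choose (n-2) : ℝ) = n * ((n:ℝ) - 1) / 2 := by
      rw [Nat.choose_symm (by omega : 2 ≤ n), Nat.cast_choose_two]
    have hnR : (0:ℝ) < n := by positivity
    have hn1R : (0:ℝ) < (n:ℝ) - 1 := by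
      have : (2:ℝ) ≤ n := by exact_mod_cast hn2
      linarith
    simp only [Hms, hES, hc1, hc2, hc3]
    set A := sigmaE n (n-2) x
    set B := sigmaE n (n-1) x
    set E := sigmaE n n x
    constructor
    · rw [div_mul_div_comm, div_pow, div_le_div_iff₀ (by positivity) (by positivity)]
      have := mul_le_mul_of_nonneg_left hb.1 (by positivity : (0:ℝ) ≤ (n:ℝ)/2)
      linarith
    · intro heq hne
      rw [div_mul_div_comm, div_pow, div_eq_div_iff (by positivity) (by positivity)] at heq
      have heq2 : 2 * (n:ℝ) * (A * E) = ((n:ℝ)-1) * B^2 :=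
        mul_left_cancel₀ (ne_of_gt hnR) (by linear_combination 2*heq)
      have hBne : B ≠ 0 := fun h => hne (by rw [h]; simp)
      have hall := hb.2 heq2 hBne
      intro a ha b hb'
      rw [hx] at ha hb'
      obtain ⟨i, _, rfl⟩ := Multiset.mem_map.1 ha
      obtain ⟨i', _, rfl⟩ := Multiset.mem_map.1 hb'
      exact hall i i'
  · -- inductive step : j + 1 < n, so n - 1 ≥ j + 1 ≥ 2, n ≥ 3
    have hn1 : 1 ≤ n := by omega
    have hn3 : 3 ≤ n := by omega
    obtain ⟨t, htcard, hrel⟩ := deriv_roots_esymm n hn1 s hcard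
    have hbridge : ∀ m, m ≤ n - 1 → Hms (n-1) t m = Hms n s m := by
      intro m hm
      have h1 := hrel m hm
      have hchoose : (n : ℝ) * ((n-1).choose m) = ((n:ℝ) - m) * (n.choose m) := by
        have h2 : n * ((n-1).choose m) = n.choose m * (n - m) := by
          obtain ⟨n', rfl⟩ : ∃ n', n = n' + 1 := ⟨n-1, by omega⟩
          simpa using (Nat.add_one_mul_choose_eq n' m).trans (Nat.choose_succ_right_eq (n'+1) m)
        calc (n : ℝ) * ((n-1).choose m) = ((n * ((n-1).choose m) : ℕ) : ℝ) := by
              push_cast; ring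
          _ = (((n.choose m) * (n - m) : ℕ) : ℝ) := by rw [h2]
          _ = ((n:ℝ) - m) * (n.choose m) := by
              push_cast [Nat.cast_sub (by omega : m ≤ n)]; ring
      have hcm : (0:ℝ) < (n.choose m : ℝ) := by
        exact_mod_cast Nat.choose_pos (by omega : m ≤ n)
      have hcm2 : (0:ℝ) < ((n-1).choose m : ℝ) := by
        exact_mod_cast Nat.choose_pos (by omega : m ≤ n - 1)
      have hnR : ((n:ℝ)) ≠ 0 := by positivity
      rw [Hms, Hms, div_eq_div_iff (by positivity) (by positivity)]
      refine mul_left_cancel₀ hnR ?_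
      linear_combination ((n.choose m : ℝ)) * h1 - (Multiset.esymm s m) * hchoose
    have hIH := IH (n-1) (by omega) j hj (by omega) t htcard
    have hb1 := hbridge (j-1) (by omega)
    have hb2 := hbridge j (by omega)
    have hb3 := hbridge (j+1) (by omega)
    constructor
    · rw [← hb1, ← hb2, ← hb3]; exact hIH.1
    · intro heq hne
      have htall := hIH.2 (by rw [hb1, hb2, hb3]; exact heq) (by rw [hb2]; exact hne)
      -- all the roots of the derivative are equal to some c
      have htne : t ≠ 0 := by
        intro h
        rw [h] at htcard
        simp at htcard
        omega
      obtain ⟨c, hc⟩ := Multiset.exists_mem_of_ne_zero htne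
      have ht : t = Multiset.replicate (n-1) c :=
        Multiset.eq_replicate.2 ⟨htcard, fun b hb => htall b hb c hc⟩
      set N : ℝ := (n : ℝ) with hN
      have hNR : (3:ℝ) ≤ N := by rw [hN]; exact_mod_cast hn3
      have hcast1 : ((n - 1 : ℕ) : ℝ) = N - 1 := by
        push_cast [Nat.cast_sub (by omega : 1 ≤ n)]; ring
      have htsum : t.sum = (N - 1) * c := by
        rw [ht, Multiset.sum_replicate, nsmul_eq_mul, hcast1]
      have ht2 : 2 * Multiset.esymm t 2 = ((N-1)^2 - (N-1)) * c^2 := by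
        rw [ht]
        have h := esymm_two (Multiset.replicate (n-1) c)
        simp only [Multiset.map_replicate, Multiset.sum_replicate, nsmul_eq_mul, hcast1] at h
        linear_combination -h
      -- transfer to s
      have hs1 : N * t.sum = (N - 1) * s.sum := by
        have h := hrel 1 (by omega)
        rw [esymm_one_ms, esymm_one_ms] at h
        simpa using h
      have hssum : s.sum = N * c := by
        have hne1 : (N - 1) ≠ 0 := by linarith
        refine mul_left_cancel₀ hne1 ?_
        rw [← hs1, htsum]; ring
      have hs2 : N * Multiset.esymm t 2 = (N - 2) * Multiset.esymm s 2 := by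
        have h := hrel 2 (by omega)
        simpa using h
      have hE2 : Multiset.esymm s 2 = N * (N - 1) * c^2 / 2 := by
        have hne2 : (N - 2) ≠ 0 := by linarith
        refine mul_left_cancel₀ hne2 ?_
        linear_combination (-1 : ℝ) * hs2 + (N/2) * ht2
      have hsq : (s.map (·^2)).sum = N * c^2 := by
        have h := esymm_two s
        rw [hssum, hE2] at h
        linear_combination -h
      -- conclude all elements of s are equal to c
      have hzero : ∑ i, (x i - c)^2 = 0 := by
        have hsx : s.sum = ∑ i, x i := by rw [hx]; rfl
        have hsx2 : (s.map (·^2)).sum = ∑ i, (x i)^2 := by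
          rw [hx, Multiset.map_map]; rfl
        have hexp : ∑ i, (x i - c)^2
            = (∑ i, (x i)^2) - 2*c*(∑ i, x i) + N * c^2 := by
          simp only [sub_sq, Finset.sum_add_distrib, Finset.sum_sub_distrib, ← Finset.mul_sum,
            ← Finset.sum_mul, Finset.sum_const, Finset.card_univ, Fintype.card_fin,
            nsmul_eq_mul, hN]
          ring
        rw [hexp, ← hsx, ← hsx2, hssum, hsq]
        ring
      have hallc : ∀ i, x i = c := by
        intro i
        have := (Finset.sum_eq_zero_iff_of_nonneg
          (fun i _ => sq_nonneg (x i - c))).1 hzero i (Finset.mem_univ i)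
        have := pow_eq_zero_iff (n := 2) (by norm_num) |>.1 this
        linarith
      intro a ha b hb'
      rw [hx] at ha hb'
      obtain ⟨i, _, rfl⟩ := Multiset.mem_map.1 ha
      obtain ⟨i', _, rfl⟩ := Multiset.mem_map.1 hb'
      rw [hallc i, hallc i']

end Auxiliary

/-- Rigidity in the Newton–Maclaurin inequality: if `λ ∈ Γ_k⁺` and
`H_{k-1}(λ) H_l(λ) = H_k(λ) H_{l-1}(λ)` for some `1 ≤ l < k ≤ n`, then all
entries of `λ` are equal. -/
theorem stmt14 (n k l : ℕ) (hl : 1 ≤ l) (hlk : l < k) (hkn : k ≤ n)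
    (x : Fin n → ℝ) (hx : x ∈ GardingCone n k)
    (heq : Hnorm n (k-1) x * Hnorm n l x = Hnorm n k x * Hnorm n (l-1) x) :
    ∀ i j : Fin n, x i = x j := by
  have hpos : ∀ m, m ≤ k → 0 < Hnorm n m x := by
    intro m hm
    match m with
    | 0 => simp [Hnorm, sigmaE_zero]
    | (m+1) =>
      have h1 := hx (m+1) (by omega) hm
      have h2 : (0:ℝ) < (n.choose (m+1) : ℝ) := by
        exact_mod_cast Nat.choose_pos (by omega : m + 1 ≤ n)
      exact div_pos h1 h2
  have NH : ∀ jj, 1 ≤ jj → jj + 1 ≤ n →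
      (Hnorm n (jj-1) x * Hnorm n (jj+1) x ≤ (Hnorm n jj x)^2 ∧
       (Hnorm n (jj-1) x * Hnorm n (jj+1) x = (Hnorm n jj x)^2 →
         Hnorm n jj x ≠ 0 → ∀ i i' : Fin n, x i = x i')) := by
    intro jj h1 h2
    have hcard : Multiset.card ((Finset.univ : Finset (Fin n)).val.map x) = n := by
      simp
    have h := newton_ms n jj h1 h2 (Finset.univ.val.map x) hcard
    have hh : ∀ m, Hms n (Finset.univ.val.map x) m = Hnorm n m x := fun m => by
      rw [Hms, Hnorm, sigmaE_eq_esymm]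
    simp only [hh] at h
    refine ⟨h.1, fun he hn0 i i' => ?_⟩
    exact h.2 he hn0 (x i) (Multiset.mem_map_of_mem x (by simp)) (x i')
      (Multiset.mem_map_of_mem x (by simp))
  have newton' : ∀ m, 1 ≤ m → m + 1 ≤ k →
      Hnorm n (m+1) x / Hnorm n m x ≤ Hnorm n m x / Hnorm n (m-1) x := by
    intro m h1 h2
    have h := (NH m h1 (by omega)).1
    rw [div_le_div_iff₀ (hpos m (by omega)) (hpos (m-1) (by omega))]
    nlinarith [h]
  have rmono : ∀ m, l + 1 ≤ m → m ≤ k →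
      Hnorm n m x / Hnorm n (m-1) x ≤ Hnorm n (l+1) x / Hnorm n l x := by
    intro m hm
    induction m, hm using Nat.le_induction with
    | base => intro _; simp
    | succ m hm ih =>
        intro hmk
        refine le_trans ?_ (ih (by omega))
        have h := newton' m (by omega) (by omega)
        simpa using h
  have hkl : Hnorm n k x / Hnorm n (k-1) x = Hnorm n l x / Hnorm n (l-1) x := by
    rw [div_eq_div_iff (hpos (k-1) (by omega)).ne' (hpos (l-1) (by omega)).ne']
    linarith [heq]
  have h2 : Hnorm n (l+1) x / Hnorm n l x ≤ Hnorm n l x / Hnorm n (l-1) x := by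
    have := newton' l hl (by omega)
    simpa using this
  have h3 : Hnorm n k x / Hnorm n (k-1) x ≤ Hnorm n (l+1) x / Hnorm n l x :=
    rmono k (by omega) le_rfl
  have h4 : Hnorm n (l+1) x / Hnorm n l x = Hnorm n l x / Hnorm n (l-1) x := by
    apply le_antisymm h2
    rw [← hkl]
    exact h3
  have h5 : Hnorm n (l-1) x * Hnorm n (l+1) x = (Hnorm n l x)^2 := by
    rw [div_eq_div_iff (hpos l (by omega)).ne' (hpos (l-1) (by omega)).ne'] at h4
    nlinarith [h4]
  exact (NH l hl (by omega)).2 h5 (ne_of_gt (hpos l (by omega)))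
end
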